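/- arXiv:2111.06543 — 4 statements merged into one kernel-verified Lean document; each statement's English description precedes it below -/
import Mathlib

section
/- Let δ > 0, let M be a smoothed maximum function as in the context, let N ≥ 2, and let Φ and φ_i be as in the context. Let ρ ∈ ℝ^N, and suppose {1,…,N} = K ⊔ J is a partition into two nonempty subsets such that 2ρ_j ≥ 2ρ_k + δ for all j ∈ J and k ∈ K. Then there exists λ ∈ ℝ^N with λ_j = 0 for every j ∈ J such that the Hessian of Φ at ρ maps λ to the all-ones vector, i.e. Σ_{k=1}^N (∂²Φ/∂ρ_i ∂ρ_k)(ρ) · λ_k = 1 for every i ∈ {1,…,N}. -/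
open Filter

section Mlemmas
variable {M : ℝ × ℝ → ℝ} {δ : ℝ}

lemma m_dir11 (hM_smooth : ContDiff ℝ (⊤ : ℕ∞) M)
    (hM_shift : ∀ u v a : ℝ, M (u + a, v + a) = M (u, v) + a) (u v : ℝ) :
    fderiv ℝ M (u, v) (1, 1) = 1 := by
  have hdM : Differentiable ℝ M := hM_smooth.differentiable (by simp)
  have hcurve : HasDerivAt (fun a : ℝ => M (u + a, v + a)) (fderiv ℝ M (u, v) (1, 1)) 0 := by
    have hc : HasDerivAt (fun a : ℝ => ((u + a, v + a) : ℝ × ℝ)) ((1 : ℝ), (1 : ℝ)) 0 := by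
      simpa using (((hasDerivAt_id (0:ℝ)).const_add u).prodMk ((hasDerivAt_id (0:ℝ)).const_add v))
    have hF := (hdM ((u, v) : ℝ × ℝ)).hasFDerivAt
    rw [show ((u, v) : ℝ × ℝ) = (u + 0, v + 0) by norm_num] at hF
    simpa [Function.comp_def] using (hF.comp_hasDerivAt 0 hc)
  have hcurve' : HasDerivAt (fun a : ℝ => M (u + a, v + a)) 1 0 := by
    have h : (fun a : ℝ => M (u + a, v + a)) = fun a => M (u, v) + a := by
      funext a; exact hM_shift u v a
    rw [h]
    simpa using (hasDerivAt_id (0:ℝ)).const_add (M (u, v))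
  exact hcurve.unique hcurve'

lemma m_symm_deriv (hM_smooth : ContDiff ℝ (⊤ : ℕ∞) M)
    (hM_symm : ∀ u v : ℝ, M (u, v) = M (v, u)) (u v : ℝ) :
    fderiv ℝ M (u, v) (0, 1) = fderiv ℝ M (v, u) (1, 0) := by
  have hdM : Differentiable ℝ M := hM_smooth.differentiable (by simp)
  have hMs : M = M ∘ (ContinuousLinearEquiv.prodComm ℝ ℝ ℝ : (ℝ × ℝ) →L[ℝ] ℝ × ℝ) := by
    funext p; exact hM_symm p.1 p.2
  calc fderiv ℝ M (u, v) (0, 1)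
      = fderiv ℝ (M ∘ (ContinuousLinearEquiv.prodComm ℝ ℝ ℝ : (ℝ × ℝ) →L[ℝ] ℝ × ℝ)) (u, v) (0, 1) := by
        rw [← hMs]
    _ = fderiv ℝ M (v, u) (1, 0) := by
        rw [fderiv_comp (u, v) (hdM _) (ContinuousLinearMap.differentiableAt _)]
        simp [ContinuousLinearEquiv.fderiv]

lemma m_d1_nonneg (hM_smooth : ContDiff ℝ (⊤ : ℕ∞) M) (hδ : 0 < δ)
    (hM_convex : ConvexOn ℝ Set.univ M)
    (hM_max : ∀ u v : ℝ, δ ≤ |u - v| → M (u, v) = max u v) (u v : ℝ) :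
    0 ≤ fderiv ℝ M (u, v) (1, 0) := by
  have hdM : Differentiable ℝ M := hM_smooth.differentiable (by simp)
  set g : ℝ → ℝ := fun t => M (t, v) with hg
  have hgd : ∀ t, HasDerivAt g (fderiv ℝ M (t, v) (1, 0)) t := by
    intro t
    have hc : HasDerivAt (fun t : ℝ => ((t, v) : ℝ × ℝ)) ((1:ℝ), (0:ℝ)) t :=
      (hasDerivAt_id t).prodMk (hasDerivAt_const t v)
    simpa [Function.comp_def] using ((hdM (t, v)).hasFDerivAt.comp_hasDerivAt t hc)
  have hgconv : ConvexOn ℝ Set.univ g := by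
    refine ⟨convex_univ, fun x _ y _ a b ha hb hab => ?_⟩
    have h2 := hM_convex.2 (Set.mem_univ ((x, v) : ℝ × ℝ)) (Set.mem_univ ((y, v) : ℝ × ℝ)) ha hb hab
    have hv : a * v + b * v = v := by rw [← add_mul, hab, one_mul]
    simp only [Prod.smul_mk, Prod.mk_add_mk, smul_eq_mul] at h2
    rw [hv] at h2
    simpa [hg] using h2
  have hmono := hgconv.monotoneOn_deriv (fun x _ => (hgd x).differentiableAt)
  set y : ℝ := min u (v - δ) - 1 with hy
  have hylt : y < v - δ := by
    have h1 : min u (v - δ) ≤ v - δ := min_le_right _ _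
    simp only [hy]; linarith
  have hyu : y ≤ u := by
    have h1 : min u (v - δ) ≤ u := min_le_left _ _
    simp only [hy]; linarith
  have hderivy : deriv g y = 0 := by
    have hev : g =ᶠ[nhds y] (fun _ => v) := by
      have hopen : IsOpen {t : ℝ | t < v - δ} := isOpen_lt continuous_id continuous_const
      filter_upwards [hopen.mem_nhds hylt] with t ht
      have habs : δ ≤ |t - v| := by
        rw [abs_sub_comm, abs_of_nonneg (by linarith)]; linarith
      show M (t, v) = v
      rw [hM_max t v habs, max_eq_right (by linarith)]
    rw [hev.deriv_eq]; simp
  have := hmono (Set.mem_univ y) (Set.mem_univ u) hyu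
  rw [hderivy, (hgd u).deriv] at this
  exact this

end Mlemmas

section Generic

lemma tangent_line {f f' : ℝ → ℝ} (hconv : ConvexOn ℝ Set.univ f)
    (hd : ∀ x, HasDerivAt f (f' x) x) (t : ℝ) : f 0 + t * f' 0 ≤ f t := by
  rcases lt_trichotomy t 0 with ht | ht | ht
  · have h := hconv.slope_le_of_hasDerivAt (Set.mem_univ t) (Set.mem_univ 0) ht (hd 0)
    rw [slope_def_field] at h
    have h0 : (0:ℝ) < 0 - t := by linarith
    rw [div_le_iff₀ h0] at h
    nlinarith
  · simp [ht]
  · have h := hconv.le_slope_of_hasDerivAt (Set.mem_univ 0) (Set.mem_univ t) ht (hd 0)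
    rw [slope_def_field] at h
    rw [le_div_iff₀ (by linarith : (0:ℝ) < t - 0)] at h
    nlinarith

lemma snd_deriv_nonneg_of_nonneg {r : ℝ → ℝ} (hr : ContDiff ℝ (⊤ : ℕ∞) r)
    (h0 : r 0 = 0) (h1 : deriv r 0 = 0) (hge : ∀ t, 0 ≤ r t) :
    0 ≤ deriv (deriv r) 0 := by
  by_contra hneg
  push_neg at hneg
  have hd1 : Differentiable ℝ r := hr.differentiable (by simp)
  have hrd : ContDiff ℝ (⊤ : ℕ∞) (deriv r) := by
    have := (contDiff_infty_iff_deriv.mp (by exact_mod_cast hr)).2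
    exact_mod_cast this
  have hd2 : Differentiable ℝ (deriv r) := hrd.differentiable (by simp)
  have hcont : Continuous (deriv (deriv r)) := hrd.continuous_deriv (mod_cast le_top)
  have hopen : IsOpen {t : ℝ | deriv (deriv r) t < 0} := isOpen_lt hcont continuous_const
  obtain ⟨ε, hε, hball⟩ := Metric.isOpen_iff.mp hopen 0 hneg
  rw [Real.ball_eq_Ioo] at hball
  simp only [zero_sub, zero_add] at hball
  have hconc : ConcaveOn ℝ (Set.Ioo (-ε) ε) r := by
    apply concaveOn_of_deriv2_nonpos (convex_Ioo _ _) (hd1.continuous.continuousOn)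
      ((hd1.differentiableOn).mono interior_subset)
      (fun x _ => (hd2 x).differentiableWithinAt)
    intro x hx
    rw [interior_Ioo] at hx
    have h2 := hball hx
    rw [Set.mem_setOf_eq] at h2
    show deriv^[2] r x ≤ 0
    rw [show deriv^[2] r = deriv (deriv r) from rfl]
    exact h2.le
  have hzero : ∀ t ∈ Set.Ioo (-ε) ε, r t = 0 := by
    intro t ht
    rcases lt_trichotomy t 0 with htn | rfl | htp
    · have h := hconc.le_slope_of_hasDerivAt ht (by constructor <;> linarith : (0:ℝ) ∈ Set.Ioo (-ε) ε)
        htn (hd1 0).hasDerivAt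
      rw [← (hd1 0).hasDerivAt.deriv, h1] at h
      rw [slope_def_field] at h
      have h0 : (0:ℝ) < 0 - t := by linarith
      rw [le_div_iff₀ h0] at h
      have := hge t
      nlinarith
    · exact h0
    · have h := hconc.slope_le_of_hasDerivAt (by constructor <;> linarith : (0:ℝ) ∈ Set.Ioo (-ε) ε)
        ht htp (hd1 0).hasDerivAt
      rw [← (hd1 0).hasDerivAt.deriv, h1] at h
      rw [slope_def_field] at h
      rw [div_le_iff₀ (by linarith : (0:ℝ) < t - 0)] at h
      have := hge t
      nlinarith
  have hev : r =ᶠ[nhds 0] (fun _ => 0) := by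
    filter_upwards [Ioo_mem_nhds (show -ε < (0:ℝ) by linarith) hε] with t ht
    exact hzero t ht
  have : deriv (deriv r) 0 = 0 := by
    rw [(hev.deriv).deriv_eq]
    simp
  linarith

end Generic

section Proj
variable {N : ℕ}

noncomputable def projS (S : Finset (Fin N)) : (Fin N → ℝ) →L[ℝ] (Fin N → ℝ) :=
  ContinuousLinearMap.pi (fun i => if i ∈ S then ContinuousLinearMap.proj i else 0)

lemma projS_apply (S : Finset (Fin N)) (x : Fin N → ℝ) (i : Fin N) :
    projS S x i = if i ∈ S then x i else 0 := by
  simp only [projS, ContinuousLinearMap.pi_apply]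
  split <;> simp_all

lemma contDiff_fderiv {E F : Type*} [NormedAddCommGroup E] [NormedSpace ℝ E]
    [NormedAddCommGroup F] [NormedSpace ℝ F] {f : E → F} (hf : ContDiff ℝ (⊤ : ℕ∞) f) :
    ContDiff ℝ (⊤ : ℕ∞) (fderiv ℝ f) := by
  apply hf.fderiv_right
  exact_mod_cast le_top

lemma fderiv2_eval {E : Type*} [NormedAddCommGroup E] [NormedSpace ℝ E]
    {f : E → ℝ} (hf : ContDiff ℝ (⊤ : ℕ∞) f) (x u w : E) :
    fderiv ℝ (fun y => fderiv ℝ f y w) x u = fderiv ℝ (fderiv ℝ f) x u w := by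
  rw [fderiv_clm_apply ((contDiff_fderiv hf).differentiable (by simp) x)
    (differentiableAt_const w)]
  simp

lemma fderiv_invariant_zero {f : (Fin N → ℝ) → ℝ} (hf : ContDiff ℝ (⊤ : ℕ∞) f)
    {π : (Fin N → ℝ) →L[ℝ] (Fin N → ℝ)} (hinv : ∀ x, f (π x) = f x)
    {w : Fin N → ℝ} (hw : π w = 0) (x : Fin N → ℝ) :
    fderiv ℝ f x w = 0 := by
  have hdf : Differentiable ℝ f := hf.differentiable (by simp)
  have hcomp : f = f ∘ π := by funext y; exact (hinv y).symm
  conv_lhs => rw [hcomp]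
  rw [fderiv_comp x (hdf _) (π.differentiableAt)]
  simp [hw]

lemma fderiv2_invariant_zero {f : (Fin N → ℝ) → ℝ} (hf : ContDiff ℝ (⊤ : ℕ∞) f)
    {π : (Fin N → ℝ) →L[ℝ] (Fin N → ℝ)} (hinv : ∀ x, f (π x) = f x)
    {w : Fin N → ℝ} (hw : π w = 0) (x u : Fin N → ℝ) :
    fderiv ℝ (fderiv ℝ f) x u w = 0 := by
  rw [← fderiv2_eval hf x u w]
  have h1 : (fun y => fderiv ℝ f y w) = fun _ => (0 : ℝ) :=
    funext (fderiv_invariant_zero hf hinv hw)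
  rw [h1]
  simp

end Proj

section Fml
variable {N : ℕ}

noncomputable def Tml (m l : Fin N) : (Fin N → ℝ) →L[ℝ] ℝ × ℝ :=
  ((2:ℝ) • (ContinuousLinearMap.proj m : (Fin N → ℝ) →L[ℝ] ℝ)).prod
    ((2:ℝ) • (ContinuousLinearMap.proj l : (Fin N → ℝ) →L[ℝ] ℝ))

lemma Tml_apply (m l : Fin N) (x : Fin N → ℝ) : Tml m l x = (2 * x m, 2 * x l) := rfl

noncomputable def gml (M : ℝ × ℝ → ℝ) (S : Finset (Fin N)) (c : ℝ) (m : Fin N) :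
    (Fin N → ℝ) → ℝ :=
  fun x => (∑ l ∈ S.erase m, M (2 * x m, 2 * x l)) + c * x m

noncomputable def Fml (M : ℝ × ℝ → ℝ) (S : Finset (Fin N)) (c : ℝ) : (Fin N → ℝ) → ℝ :=
  fun x => ∑ m ∈ S, Real.exp (gml M S c m x)

noncomputable def Dgml (M : ℝ × ℝ → ℝ) (S : Finset (Fin N)) (c : ℝ) (m : Fin N)
    (x : Fin N → ℝ) : (Fin N → ℝ) →L[ℝ] ℝ :=
  (∑ l ∈ S.erase m, (fderiv ℝ M (2 * x m, 2 * x l)).comp (Tml m l)) +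
    c • (ContinuousLinearMap.proj m)

noncomputable def DFml (M : ℝ × ℝ → ℝ) (S : Finset (Fin N)) (c : ℝ)
    (x : Fin N → ℝ) : (Fin N → ℝ) →L[ℝ] ℝ :=
  ∑ m ∈ S, Real.exp (gml M S c m x) • Dgml M S c m x

variable {M : ℝ × ℝ → ℝ} {S : Finset (Fin N)} {c : ℝ}

lemma hasFDerivAt_gml (hM_smooth : ContDiff ℝ (⊤ : ℕ∞) M) (m : Fin N) (x : Fin N → ℝ) :
    HasFDerivAt (gml M S c m) (Dgml M S c m x) x := by
  have hdM : Differentiable ℝ M := hM_smooth.differentiable (by simp)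
  apply HasFDerivAt.add
  · apply HasFDerivAt.fun_sum
    intro l _
    have h1 : HasFDerivAt (fun y : Fin N → ℝ => M (Tml m l y))
        ((fderiv ℝ M (Tml m l x)).comp (Tml m l)) x :=
      (hdM (Tml m l x)).hasFDerivAt.comp x (Tml m l).hasFDerivAt
    simpa [Tml_apply] using h1
  · have h2 : HasFDerivAt (fun y : Fin N → ℝ =>
        (c • (ContinuousLinearMap.proj m : (Fin N → ℝ) →L[ℝ] ℝ)) y)
        (c • (ContinuousLinearMap.proj m : (Fin N → ℝ) →L[ℝ] ℝ)) x :=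
      (c • (ContinuousLinearMap.proj m : (Fin N → ℝ) →L[ℝ] ℝ)).hasFDerivAt
    simpa [smul_eq_mul] using h2

lemma contDiff_gml (hM_smooth : ContDiff ℝ (⊤ : ℕ∞) M) (m : Fin N) :
    ContDiff ℝ (⊤ : ℕ∞) (gml M S c m) := by
  apply ContDiff.add
  · apply ContDiff.sum
    intro l _
    have := hM_smooth.comp (Tml m l).contDiff
    simpa [Function.comp_def, Tml_apply] using this
  · have : ContDiff ℝ (⊤ : ℕ∞) fun x : Fin N → ℝ =>
        (c • (ContinuousLinearMap.proj m : (Fin N → ℝ) →L[ℝ] ℝ)) x :=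
      (c • (ContinuousLinearMap.proj m : (Fin N → ℝ) →L[ℝ] ℝ)).contDiff
    simpa [smul_eq_mul] using this

lemma contDiff_Fml (hM_smooth : ContDiff ℝ (⊤ : ℕ∞) M) :
    ContDiff ℝ (⊤ : ℕ∞) (Fml M S c) := by
  apply ContDiff.sum
  intro m _
  exact (contDiff_gml hM_smooth m).exp

lemma hasFDerivAt_Fml (hM_smooth : ContDiff ℝ (⊤ : ℕ∞) M) (x : Fin N → ℝ) :
    HasFDerivAt (Fml M S c) (DFml M S c x) x := by
  apply HasFDerivAt.fun_sum
  intro m _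
  exact (hasFDerivAt_gml hM_smooth m x).exp

lemma fderiv_Fml_apply (hM_smooth : ContDiff ℝ (⊤ : ℕ∞) M) (x v : Fin N → ℝ) :
    fderiv ℝ (Fml M S c) x v = ∑ m ∈ S, Real.exp (gml M S c m x) *
      ((∑ l ∈ S.erase m, fderiv ℝ M (2 * x m, 2 * x l) (2 * v m, 2 * v l)) + c * v m) := by
  rw [(hasFDerivAt_Fml hM_smooth x).fderiv]
  rw [DFml, ContinuousLinearMap.sum_apply]
  refine Finset.sum_congr rfl fun m _ => ?_
  rw [ContinuousLinearMap.smul_apply, Dgml, ContinuousLinearMap.add_apply,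
    ContinuousLinearMap.sum_apply, smul_eq_mul]
  rfl

lemma convexOn_gml (hM_convex : ConvexOn ℝ Set.univ M) (m : Fin N) :
    ConvexOn ℝ Set.univ (gml M S c m) := by
  apply ConvexOn.add
  · have hterm : ∀ l : Fin N, ConvexOn ℝ Set.univ (fun x : Fin N → ℝ => M (2 * x m, 2 * x l)) := by
      intro l
      have h := hM_convex.comp_linearMap ((Tml m l : (Fin N → ℝ) →L[ℝ] ℝ × ℝ) :
        (Fin N → ℝ) →ₗ[ℝ] ℝ × ℝ)
      simpa [Function.comp_def, Tml_apply] using h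
    have heq : (fun x : Fin N → ℝ => ∑ l ∈ S.erase m, M (2 * x m, 2 * x l)) =
        ∑ l ∈ S.erase m, (fun x : Fin N → ℝ => M (2 * x m, 2 * x l)) := by
      funext x; simp
    rw [heq]
    exact Finset.sum_induction _ _ (fun f g hf hg => hf.add hg)
      (convexOn_const 0 convex_univ) (fun l _ => hterm l)
  · refine ⟨convex_univ, fun x _ y _ a b _ _ _ => ?_⟩
    simp only [Pi.add_apply, Pi.smul_apply, smul_eq_mul]
    ring_nf
    exact le_refl _

lemma Fml_invariant (x : Fin N → ℝ) : Fml M S c (projS S x) = Fml M S c x := by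
  unfold Fml gml
  refine Finset.sum_congr rfl fun m hm => ?_
  congr 1
  have hxm : projS S x m = x m := by rw [projS_apply, if_pos hm]
  congr 1
  · refine Finset.sum_congr rfl fun l hl => ?_
    have hxl : projS S x l = x l := by rw [projS_apply, if_pos (Finset.mem_of_mem_erase hl)]
    rw [hxm, hxl]
  · rw [hxm]

noncomputable def oneS (S : Finset (Fin N)) : Fin N → ℝ := fun i => if i ∈ S then 1 else 0

lemma fderiv_Fml_oneS (hM_smooth : ContDiff ℝ (⊤ : ℕ∞) M)
    (hM_shift : ∀ u v a : ℝ, M (u + a, v + a) = M (u, v) + a) (x : Fin N → ℝ) :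
    fderiv ℝ (Fml M S c) x (oneS S) = (2 * (S.card - 1) + c) * Fml M S c x := by
  rw [fderiv_Fml_apply hM_smooth, Fml, Finset.mul_sum]
  refine Finset.sum_congr rfl fun m hm => ?_
  rw [mul_comm (2 * ((S.card : ℝ) - 1) + c) _]
  congr 1
  have h1 : ∀ l ∈ S.erase m, fderiv ℝ M (2 * x m, 2 * x l)
      (2 * oneS S m, 2 * oneS S l) = 2 := by
    intro l hl
    have hmS : oneS S m = 1 := by rw [oneS, if_pos hm]
    have hlS : oneS S l = 1 := by rw [oneS, if_pos (Finset.mem_of_mem_erase hl)]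
    rw [hmS, hlS]
    have : ((2:ℝ) * 1, (2:ℝ) * 1) = (2:ℝ) • ((1:ℝ), (1:ℝ)) := by
      rw [Prod.smul_mk]; norm_num
    rw [this, ContinuousLinearMap.map_smul, m_dir11 hM_smooth hM_shift]
    norm_num
  rw [Finset.sum_congr rfl h1, Finset.sum_const, Finset.card_erase_of_mem hm]
  have hmS : oneS S m = 1 := by rw [oneS, if_pos hm]
  rw [hmS]
  have hcard : (1:ℕ) ≤ S.card := Finset.card_pos.mpr ⟨m, hm⟩
  have : ((S.card - 1 : ℕ) : ℝ) = (S.card : ℝ) - 1 := by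
    push_cast [Nat.cast_sub hcard]; ring
  rw [nsmul_eq_mul, this]
  ring

lemma fderiv2_Fml_oneS (hM_smooth : ContDiff ℝ (⊤ : ℕ∞) M)
    (hM_shift : ∀ u v a : ℝ, M (u + a, v + a) = M (u, v) + a) (x w : Fin N → ℝ) :
    fderiv ℝ (fderiv ℝ (Fml M S c)) x w (oneS S) =
      (2 * (S.card - 1) + c) * fderiv ℝ (Fml M S c) x w := by
  rw [← fderiv2_eval (contDiff_Fml hM_smooth) x w (oneS S)]
  have h : (fun y => fderiv ℝ (Fml M S c) y (oneS S)) =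
      fun y => (2 * ((S.card : ℝ) - 1) + c) * Fml M S c y :=
    funext (fderiv_Fml_oneS hM_smooth hM_shift)
  rw [h, fderiv_const_mul ((contDiff_Fml hM_smooth).differentiable (by simp) x)]
  simp

lemma qform_Fml (hM_smooth : ContDiff ℝ (⊤ : ℕ∞) M) (hM_convex : ConvexOn ℝ Set.univ M)
    (x v : Fin N → ℝ) :
    ∑ m ∈ S, Real.exp (gml M S c m x) * (Dgml M S c m x v) ^ 2
      ≤ fderiv ℝ (fderiv ℝ (Fml M S c)) x v v := by
  classical
  set L : ℝ → (Fin N → ℝ) := fun t => x + t • v with hLdef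
  have hL0 : L 0 = x := by simp [hLdef]
  have hLd : ∀ t : ℝ, HasDerivAt L v t := by
    intro t
    simpa [hLdef] using (((hasDerivAt_id t).smul_const v).const_add x)
  have hLc : ContDiff ℝ (⊤ : ℕ∞) L := contDiff_const.add (contDiff_id.smul contDiff_const)
  set F := Fml M S c with hFdef
  set h : ℝ → ℝ := fun t => F (L t) with hhdef
  set cm : Fin N → ℝ := fun m => Dgml M S c m x v with hcmdef
  set am : Fin N → ℝ := fun m => gml M S c m x with hamdef
  set q : ℝ → ℝ := fun t => ∑ m ∈ S, Real.exp (am m + t * cm m) with hqdef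
  -- first derivatives
  have hhd : ∀ t, HasDerivAt h (fderiv ℝ F (L t) v) t := by
    intro t
    have := (hasFDerivAt_Fml (S := S) (c := c) hM_smooth (L t)).comp_hasDerivAt t (hLd t)
    rwa [← (hasFDerivAt_Fml (S := S) (c := c) hM_smooth (L t)).fderiv] at this
  have hqd : ∀ t, HasDerivAt q (∑ m ∈ S, Real.exp (am m + t * cm m) * cm m) t := by
    intro t
    apply HasDerivAt.fun_sum
    intro m _
    have h1 : HasDerivAt (fun s : ℝ => am m + s * cm m) (cm m) t := by
      simpa using ((hasDerivAt_id t).mul_const (cm m)).const_add (am m)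
    simpa [mul_comm] using h1.exp
  -- second derivatives
  have hdiff2 : ∀ y, DifferentiableAt ℝ (fun z => fderiv ℝ F z v) y := fun y =>
    DifferentiableAt.clm_apply
      (((contDiff_fderiv (contDiff_Fml hM_smooth)).differentiable (by simp)) y)
      (differentiableAt_const v)
  have hh2 : HasDerivAt (fun t => fderiv ℝ F (L t) v)
      (fderiv ℝ (fderiv ℝ F) x v v) 0 := by
    have h2 := (hdiff2 (L 0)).hasFDerivAt.comp_hasDerivAt 0 (hLd 0)
    rw [hL0] at h2
    rwa [fderiv2_eval (contDiff_Fml hM_smooth) x v v] at h2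
  have hq2 : HasDerivAt (fun t => ∑ m ∈ S, Real.exp (am m + t * cm m) * cm m)
      (∑ m ∈ S, Real.exp (am m) * cm m ^ 2) 0 := by
    have h0 : HasDerivAt (fun t => ∑ m ∈ S, Real.exp (am m + t * cm m) * cm m)
        (∑ m ∈ S, Real.exp (am m + 0 * cm m) * cm m * cm m) 0 := by
      apply HasDerivAt.fun_sum
      intro m _
      have h1 : HasDerivAt (fun s : ℝ => am m + s * cm m) (cm m) 0 := by
        simpa using ((hasDerivAt_id (0:ℝ)).mul_const (cm m)).const_add (am m)
      exact h1.exp.mul_const (cm m)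
    have heq : ∑ m ∈ S, Real.exp (am m + 0 * cm m) * cm m * cm m
        = ∑ m ∈ S, Real.exp (am m) * cm m ^ 2 := by
      refine Finset.sum_congr rfl fun m _ => ?_
      rw [zero_mul, add_zero]; ring
    rw [← heq]
    exact h0
  -- r = h - q is nonneg with r 0 = 0, r' 0 = 0
  have hval0 : h 0 = q 0 := by
    simp [hhdef, hqdef, hL0, hFdef, Fml, hamdef]
  have hderiv0 : fderiv ℝ F x v = ∑ m ∈ S, Real.exp (am m + 0 * cm m) * cm m := by
    rw [fderiv_Fml_apply hM_smooth]
    refine Finset.sum_congr rfl fun m _ => ?_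
    simp only [zero_mul, add_zero]
    congr 1
    rw [hcmdef]
    simp only [Dgml, ContinuousLinearMap.add_apply, ContinuousLinearMap.sum_apply]
    rfl
  have hge : ∀ t, q t ≤ h t := by
    intro t
    have hht : h t = ∑ m ∈ S, Real.exp (gml M S c m (L t)) := rfl
    rw [hht]
    apply Finset.sum_le_sum
    intro m _
    apply Real.exp_le_exp.mpr
    -- tangent line inequality for f := gml ∘ L
    have hconvf : ConvexOn ℝ Set.univ (fun s => gml M S c m (L s)) := by
      refine ⟨convex_univ, fun s _ t' _ a b ha hb hab => ?_⟩
      have hx : a • x + b • x = x := by rw [← add_smul, hab, one_smul]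
      have hLcomb : L (a * s + b * t') = a • L s + b • L t' := by
        calc L (a * s + b * t') = x + (a * s + b * t') • v := rfl
          _ = (a • x + b • x) + ((a * s) • v + (b * t') • v) := by
              rw [hx, add_smul]
          _ = a • L s + b • L t' := by
              simp only [hLdef, smul_add, smul_smul]; abel
      have := (convexOn_gml (S := S) (c := c) hM_convex m).2
        (Set.mem_univ (L s)) (Set.mem_univ (L t')) ha hb hab
      rw [← hLcomb] at this
      simpa [smul_eq_mul] using this
    have hfd : ∀ s : ℝ, HasDerivAt (fun u => gml M S c m (L u)) (Dgml M S c m (L s) v) s :=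
      fun s => (hasFDerivAt_gml hM_smooth m (L s)).comp_hasDerivAt s (hLd s)
    have htl := tangent_line hconvf hfd t
    rw [hL0] at htl
    simpa [hamdef, hcmdef, hL0, mul_comm] using htl
  set r : ℝ → ℝ := fun t => h t - q t with hrdef
  have hrc : ContDiff ℝ (⊤ : ℕ∞) r := by
    apply ContDiff.sub
    · exact (contDiff_Fml hM_smooth).comp hLc
    · apply ContDiff.sum
      intro m _
      exact (contDiff_const.add (contDiff_id.mul contDiff_const)).exp
  have hr0 : r 0 = 0 := by rw [hrdef]; simp only; rw [hval0]; ring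
  have hrderiv : deriv r = fun t => fderiv ℝ F (L t) v - ∑ m ∈ S, Real.exp (am m + t * cm m) * cm m := by
    funext t
    rw [hrdef]
    rw [deriv_fun_sub (hhd t).differentiableAt (hqd t).differentiableAt, (hhd t).deriv, (hqd t).deriv]
  have hr1 : deriv r 0 = 0 := by
    rw [hrderiv]; simp only [hL0]; rw [hderiv0]; ring
  have hrge : ∀ t, 0 ≤ r t := fun t => by rw [hrdef]; simp only; linarith [hge t]
  have h2r : deriv (deriv r) 0 =
      fderiv ℝ (fderiv ℝ F) x v v - ∑ m ∈ S, Real.exp (am m) * cm m ^ 2 := by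
    rw [hrderiv]
    rw [deriv_fun_sub hh2.differentiableAt hq2.differentiableAt, hh2.deriv, hq2.deriv]
  have := snd_deriv_nonneg_of_nonneg hrc hr0 hr1 hrge
  rw [h2r] at this
  have hfin : ∑ m ∈ S, Real.exp (am m) * cm m ^ 2 ≤ fderiv ℝ (fderiv ℝ F) x v v := by linarith
  exact hfin

lemma sum_erase_comm (S : Finset (Fin N)) (g : Fin N → Fin N → ℝ) :
    ∑ m ∈ S, ∑ l ∈ S.erase m, g m l = ∑ m ∈ S, ∑ l ∈ S.erase m, g l m := by
  have key : ∀ g' : Fin N → Fin N → ℝ, ∀ m ∈ S,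
      ∑ l ∈ S.erase m, g' m l = ∑ l ∈ S, if l = m then 0 else g' m l := by
    intro g' m hm
    rw [← Finset.sum_erase_add S _ hm, if_pos rfl, add_zero]
    exact (Finset.sum_congr rfl fun l hl => (if_neg (Finset.ne_of_mem_erase hl)).symm)
  calc ∑ m ∈ S, ∑ l ∈ S.erase m, g m l
      = ∑ m ∈ S, ∑ l ∈ S, if l = m then 0 else g m l :=
        Finset.sum_congr rfl (fun m hm => key g m hm)
    _ = ∑ l ∈ S, ∑ m ∈ S, if l = m then 0 else g m l := Finset.sum_comm
    _ = ∑ m ∈ S, ∑ l ∈ S, if l = m then 0 else g l m := by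
        refine Finset.sum_congr rfl fun m _ => Finset.sum_congr rfl fun l _ => ?_
        by_cases h : l = m
        · subst h; simp
        · rw [if_neg (fun hme => h (hme.symm)), if_neg h]
    _ = ∑ m ∈ S, ∑ l ∈ S.erase m, g l m :=
        Finset.sum_congr rfl (fun m hm => (key (fun a b => g b a) m hm).symm)

lemma kernel_lemma (hM_smooth : ContDiff ℝ (⊤ : ℕ∞) M) (hδ : 0 < δ)
    (hM_convex : ConvexOn ℝ Set.univ M)
    (hM_max : ∀ u v : ℝ, δ ≤ |u - v| → M (u, v) = max u v)
    (hM_shift : ∀ u v a : ℝ, M (u + a, v + a) = M (u, v) + a)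
    (hM_symm : ∀ u v : ℝ, M (u, v) = M (v, u))
    (hc : 2 ≤ c)
    (x v : Fin N → ℝ) (hv : ∀ m, m ∉ S → v m = 0)
    (hDg : ∀ m ∈ S, Dgml M S c m x v = 0) : v = 0 := by
  classical
  set d1 : Fin N → Fin N → ℝ := fun m l => fderiv ℝ M (2 * x m, 2 * x l) (1, 0) with hd1
  set d2 : Fin N → Fin N → ℝ := fun m l => fderiv ℝ M (2 * x m, 2 * x l) (0, 1) with hd2
  have hDgval : ∀ m ∈ S, Dgml M S c m x v =
      (∑ l ∈ S.erase m, (2 * v m * d1 m l + 2 * v l * d2 m l)) + c * v m := by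
    intro m _
    rw [Dgml, ContinuousLinearMap.add_apply, ContinuousLinearMap.sum_apply]
    congr 1
    · refine Finset.sum_congr rfl fun l _ => ?_
      have happ : (Tml m l) v = ((2 * v m, 2 * v l) : ℝ × ℝ) := rfl
      show fderiv ℝ M (2 * x m, 2 * x l) ((Tml m l) v) = _
      rw [happ]
      have hsplit : ((2 * v m, 2 * v l) : ℝ × ℝ)
          = (2 * v m) • ((1:ℝ), (0:ℝ)) + (2 * v l) • ((0:ℝ), (1:ℝ)) := by
        rw [Prod.smul_mk, Prod.smul_mk, Prod.mk_add_mk]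
        norm_num
      rw [hsplit, map_add, map_smul, map_smul, smul_eq_mul, smul_eq_mul]
  have hzero : (0:ℝ) = ∑ m ∈ S, v m * Dgml M S c m x v := by
    rw [Finset.sum_congr rfl (fun m hm => by rw [hDg m hm, mul_zero])]
    simp
  rw [Finset.sum_congr rfl (fun m hm => by rw [hDgval m hm])] at hzero
  have hexpand : ∑ m ∈ S, v m * ((∑ l ∈ S.erase m, (2 * v m * d1 m l + 2 * v l * d2 m l)) + c * v m)
      = (∑ m ∈ S, ∑ l ∈ S.erase m, 2 * v m ^ 2 * d1 m l)
        + (∑ m ∈ S, ∑ l ∈ S.erase m, 2 * (v m * v l) * d2 m l)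
        + c * ∑ m ∈ S, v m ^ 2 := by
    rw [Finset.mul_sum]
    rw [← Finset.sum_add_distrib, ← Finset.sum_add_distrib]
    refine Finset.sum_congr rfl fun m _ => ?_
    rw [mul_add, Finset.mul_sum, ← Finset.sum_add_distrib]
    congr 1
    · refine Finset.sum_congr rfl fun l _ => ?_
      ring
    · ring
  rw [hexpand] at hzero
  -- cross term equals sum of products
  have hcross : ∑ m ∈ S, ∑ l ∈ S.erase m, 2 * (v m * v l) * d2 m l
      = ∑ m ∈ S, ∑ l ∈ S.erase m, v m * v l := by
    have hswap := sum_erase_comm S (fun m l => 2 * (v m * v l) * d2 m l)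
    have hdbl : (∑ m ∈ S, ∑ l ∈ S.erase m, 2 * (v l * v m) * d2 l m)
          + (∑ m ∈ S, ∑ l ∈ S.erase m, 2 * (v m * v l) * d2 m l)
        = ∑ m ∈ S, ∑ l ∈ S.erase m, 2 * (v m * v l) := by
      rw [← Finset.sum_add_distrib]
      refine Finset.sum_congr rfl fun m _ => ?_
      rw [← Finset.sum_add_distrib]
      refine Finset.sum_congr rfl fun l _ => ?_
      have hsum11 : d2 l m + d2 m l = 1 := by
        have h1 : d2 l m = fderiv ℝ M (2 * x m, 2 * x l) (1, 0) := by
          rw [hd2]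
          exact m_symm_deriv hM_smooth hM_symm (2 * x l) (2 * x m)
        have h2 : fderiv ℝ M (2 * x m, 2 * x l) (1, 0) + d2 m l
            = fderiv ℝ M (2 * x m, 2 * x l) (1, 1) := by
          rw [hd2, ← map_add]
          norm_num
        rw [h1, h2, m_dir11 hM_smooth hM_shift]
      have : 2 * (v l * v m) * d2 l m + 2 * (v m * v l) * d2 m l
          = 2 * (v m * v l) * (d2 l m + d2 m l) := by ring
      rw [this, hsum11, mul_one]
    have h2 : (2:ℝ) * ∑ m ∈ S, ∑ l ∈ S.erase m, (v m * v l)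
        = ∑ m ∈ S, ∑ l ∈ S.erase m, 2 * (v m * v l) := by
      rw [Finset.mul_sum]
      exact Finset.sum_congr rfl fun m _ => by rw [Finset.mul_sum]
    linarith [hdbl, h2]
  rw [hcross] at hzero
  -- (sum of v)^2 identity
  have hsq : ∑ m ∈ S, ∑ l ∈ S.erase m, v m * v l
      = (∑ m ∈ S, v m) ^ 2 - ∑ m ∈ S, v m ^ 2 := by
    have : (∑ m ∈ S, v m) ^ 2 = ∑ m ∈ S, ∑ l ∈ S, v m * v l := by
      rw [sq, Finset.sum_mul_sum]
    rw [this]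
    rw [eq_sub_iff_add_eq]
    rw [← Finset.sum_add_distrib]
    refine Finset.sum_congr rfl fun m hm => ?_
    rw [sq]
    exact Finset.sum_erase_add S _ hm
  rw [hsq] at hzero
  -- nonnegativity of the d1 part
  have hP : 0 ≤ ∑ m ∈ S, ∑ l ∈ S.erase m, 2 * v m ^ 2 * d1 m l := by
    apply Finset.sum_nonneg
    intro m _
    apply Finset.sum_nonneg
    intro l _
    have := m_d1_nonneg hM_smooth hδ hM_convex hM_max (2 * x m) (2 * x l)
    positivity
  have hsumsq : 0 ≤ (∑ m ∈ S, v m) ^ 2 := sq_nonneg _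
  have hvsq : ∑ m ∈ S, v m ^ 2 ≤ 0 := by nlinarith [Finset.sum_nonneg (fun m (_ : m ∈ S) => sq_nonneg (v m))]
  have hvS : ∀ m ∈ S, v m = 0 := by
    intro m hm
    have hall := (Finset.sum_eq_zero_iff_of_nonneg (fun m (_ : m ∈ S) => sq_nonneg (v m))).mp
      (le_antisymm hvsq (Finset.sum_nonneg (fun m (_ : m ∈ S) => sq_nonneg (v m)))) m hm
    exact pow_eq_zero_iff (by norm_num) |>.mp hall
  funext m
  by_cases hm : m ∈ S
  · exact hvS m hm
  · exact hv m hm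

end Fml

section GG
variable {N : ℕ}

noncomputable def lS (S : Finset (Fin N)) : (Fin N → ℝ) →L[ℝ] ℝ :=
  ∑ j ∈ S, (2:ℝ) • (ContinuousLinearMap.proj j : (Fin N → ℝ) →L[ℝ] ℝ)

lemma lS_apply (S : Finset (Fin N)) (x : Fin N → ℝ) : lS S x = ∑ j ∈ S, 2 * x j := by
  rw [lS, ContinuousLinearMap.sum_apply]
  exact Finset.sum_congr rfl fun j _ => rfl

lemma lS_zero (S : Finset (Fin N)) (w : Fin N → ℝ) (hw : ∀ j ∈ S, w j = 0) : lS S w = 0 := by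
  rw [lS_apply]
  exact Finset.sum_eq_zero fun j hj => by rw [hw j hj, mul_zero]

lemma lS_single (S : Finset (Fin N)) (j : Fin N) (hj : j ∈ S) :
    lS S (Pi.single j 1) = 2 := by
  rw [lS_apply]
  rw [Finset.sum_eq_single j]
  · simp
  · intro l _ hl
    rw [Pi.single_eq_of_ne hl, mul_zero]
  · intro hj'; exact absurd hj hj'

noncomputable def EE (S : Finset (Fin N)) : (Fin N → ℝ) → ℝ := fun x => Real.exp (lS S x)

noncomputable def GG (M : ℝ × ℝ → ℝ) (J : Finset (Fin N)) : (Fin N → ℝ) → ℝ :=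
  fun x => Fml M J (2 * (Jᶜ.card + 1)) x + EE J x * Fml M Jᶜ 2 x

end GG

section GG2
variable {N : ℕ} {M : ℝ × ℝ → ℝ} {J : Finset (Fin N)}

lemma projS_zero (S : Finset (Fin N)) (w : Fin N → ℝ) (hw : ∀ j ∈ S, w j = 0) :
    projS S w = 0 := by
  funext i
  rw [projS_apply]
  split
  · next h => exact hw i h
  · rfl

lemma contDiff_EE (S : Finset (Fin N)) : ContDiff ℝ (⊤ : ℕ∞) (EE S) :=
  ((lS S).contDiff).exp

lemma hasFDerivAt_EE (S : Finset (Fin N)) (x : Fin N → ℝ) :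
    HasFDerivAt (EE S) (EE S x • lS S) x := ((lS S).hasFDerivAt (x := x)).exp

lemma contDiff_GG (hM_smooth : ContDiff ℝ (⊤ : ℕ∞) M) : ContDiff ℝ (⊤ : ℕ∞) (GG M J) :=
  (contDiff_Fml hM_smooth).add ((contDiff_EE J).mul (contDiff_Fml hM_smooth))

lemma fderiv_GG_K (hM_smooth : ContDiff ℝ (⊤ : ℕ∞) M) (x w : Fin N → ℝ)
    (hw : ∀ j ∈ J, w j = 0) :
    fderiv ℝ (GG M J) x w = EE J x * fderiv ℝ (Fml M Jᶜ 2) x w := by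
  have hdE : DifferentiableAt ℝ (EE J) x := (contDiff_EE J).differentiable (by simp) x
  have hdA : DifferentiableAt ℝ (Fml M J (2 * (Jᶜ.card + 1))) x :=
    (contDiff_Fml hM_smooth).differentiable (by simp) x
  have hdP : DifferentiableAt ℝ (Fml M Jᶜ 2) x :=
    (contDiff_Fml hM_smooth).differentiable (by simp) x
  have hGG : GG M J = fun y => Fml M J (2 * (Jᶜ.card + 1)) y + EE J y * Fml M Jᶜ 2 y := rfl
  rw [hGG, fderiv_fun_add hdA (hdE.fun_mul hdP), ContinuousLinearMap.add_apply]
  rw [fderiv_invariant_zero (contDiff_Fml hM_smooth) (Fml_invariant (S := J))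
    (projS_zero J w hw) x]
  rw [fderiv_fun_mul hdE hdP, ContinuousLinearMap.add_apply, ContinuousLinearMap.smul_apply,
    ContinuousLinearMap.smul_apply, (hasFDerivAt_EE J x).fderiv, ContinuousLinearMap.smul_apply,
    lS_zero J w hw]
  simp [smul_eq_mul]

lemma fderiv2_GG (hM_smooth : ContDiff ℝ (⊤ : ℕ∞) M) (x u w : Fin N → ℝ)
    (hw : ∀ j ∈ J, w j = 0) :
    fderiv ℝ (fderiv ℝ (GG M J)) x u w =
      EE J x * fderiv ℝ (fderiv ℝ (Fml M Jᶜ 2)) x u w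
      + (lS J u) * (EE J x * fderiv ℝ (Fml M Jᶜ 2) x w) := by
  rw [← fderiv2_eval (contDiff_GG hM_smooth) x u w]
  have hfun : (fun y => fderiv ℝ (GG M J) y w) = fun y => EE J y * fderiv ℝ (Fml M Jᶜ 2) y w :=
    funext fun y => fderiv_GG_K hM_smooth y w hw
  rw [hfun]
  have hdE : DifferentiableAt ℝ (EE J) x := (contDiff_EE J).differentiable (by simp) x
  have hdDP : DifferentiableAt ℝ (fun y => fderiv ℝ (Fml M Jᶜ 2) y w) x :=
    DifferentiableAt.clm_apply
      (((contDiff_fderiv (contDiff_Fml hM_smooth)).differentiable (by simp)) x)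
      (differentiableAt_const w)
  rw [fderiv_fun_mul hdE hdDP, ContinuousLinearMap.add_apply, ContinuousLinearMap.smul_apply,
    ContinuousLinearMap.smul_apply, (hasFDerivAt_EE J x).fderiv, ContinuousLinearMap.smul_apply,
    fderiv2_eval (contDiff_Fml hM_smooth) x u w]
  simp only [smul_eq_mul]
  ring

lemma fderiv2_GG_KK (hM_smooth : ContDiff ℝ (⊤ : ℕ∞) M) (x u w : Fin N → ℝ)
    (hu : ∀ j ∈ J, u j = 0) (hw : ∀ j ∈ J, w j = 0) :
    fderiv ℝ (fderiv ℝ (GG M J)) x u w =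
      EE J x * fderiv ℝ (fderiv ℝ (Fml M Jᶜ 2)) x u w := by
  rw [fderiv2_GG hM_smooth x u w hw, lS_zero J u hu]
  ring

lemma fderiv2_GG_JK (hM_smooth : ContDiff ℝ (⊤ : ℕ∞) M) (x w : Fin N → ℝ)
    (hw : ∀ j ∈ J, w j = 0) (j : Fin N) (hj : j ∈ J) :
    fderiv ℝ (fderiv ℝ (GG M J)) x (Pi.single j 1) w =
      2 * (EE J x * fderiv ℝ (Fml M Jᶜ 2) x w) := by
  rw [fderiv2_GG hM_smooth x (Pi.single j 1) w hw, lS_single J j hj]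
  have hsymm := ((contDiff_Fml (S := Jᶜ) (c := 2) hM_smooth).contDiffAt
    (x := x)).isSymmSndFDerivAt (by
      rw [minSmoothness_of_isRCLikeNormedField, show ((2:WithTop ℕ∞)) = ((2:ℕ∞) : WithTop ℕ∞) by rfl]
      exact WithTop.coe_le_coe.mpr le_top) (Pi.single j 1) w
  rw [hsymm]
  have hz : projS Jᶜ (Pi.single j (1:ℝ)) = 0 := by
    apply projS_zero
    intro i hi
    have : i ≠ j := by
      intro h; subst h; exact (Finset.mem_compl.mp hi) hj
    exact Pi.single_eq_of_ne this 1
  rw [fderiv2_invariant_zero (contDiff_Fml hM_smooth) (Fml_invariant (S := Jᶜ)) hz x w]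
  ring

end GG2

section Region
variable {N : ℕ} {M : ℝ × ℝ → ℝ} {δ : ℝ}

lemma region_eq (hδ : 0 < δ)
    (hM_max : ∀ u v : ℝ, δ ≤ |u - v| → M (u, v) = max u v)
    (J : Finset (Fin N)) (x : Fin N → ℝ)
    (hx : ∀ j ∈ J, ∀ k ∈ Jᶜ, 2 * x k + δ ≤ 2 * x j) :
    Fml M Finset.univ 2 x = GG M J x := by
  classical
  have hsplit : ∀ m : Fin N, ∀ T : Finset (Fin N), m ∈ T →
      ∀ f : Fin N → ℝ, ∑ l ∈ Finset.univ.erase m, f l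
        = ∑ l ∈ T.erase m, f l + ∑ l ∈ Tᶜ, f l := by
    intro m T hm f
    rw [← Finset.sum_union]
    · congr 1
      ext l
      simp only [Finset.mem_union, Finset.mem_erase, Finset.mem_compl, Finset.mem_univ,
        and_true]
      constructor
      · intro hne
        by_cases hlT : l ∈ T
        · exact Or.inl ⟨hne, hlT⟩
        · exact Or.inr hlT
      · intro h
        rcases h with h | h
        · exact h.1
        · exact fun he => h (he ▸ hm)
    · rw [Finset.disjoint_left]
      intro a ha hac
      exact (Finset.mem_compl.mp hac) (Finset.mem_of_mem_erase ha)
  rw [show Fml M Finset.univ 2 x = ∑ m, Real.exp (gml M Finset.univ 2 m x) from rfl]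
  rw [← Finset.sum_add_sum_compl J]
  rw [GG]
  congr 1
  -- J part
  · rw [show Fml M J (2 * (Jᶜ.card + 1)) x
      = ∑ m ∈ J, Real.exp (gml M J (2 * (Jᶜ.card + 1)) m x) from rfl]
    refine Finset.sum_congr rfl fun m hm => ?_
    congr 1
    rw [gml, gml, hsplit m J hm]
    have hmax : ∀ l ∈ Jᶜ, M (2 * x m, 2 * x l) = 2 * x m := by
      intro l hl
      have hle := hx m hm l hl
      rw [hM_max _ _ (by rw [abs_of_nonneg (by linarith)]; linarith)]
      exact max_eq_left (by linarith)
    rw [Finset.sum_congr rfl hmax, Finset.sum_const, nsmul_eq_mul]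
    push_cast
    ring
  -- K part
  · rw [show Fml M Jᶜ 2 x = ∑ m ∈ Jᶜ, Real.exp (gml M Jᶜ 2 m x) from rfl]
    rw [Finset.mul_sum]
    refine Finset.sum_congr rfl fun m hm => ?_
    rw [EE, ← Real.exp_add]
    congr 1
    rw [gml, gml, hsplit m Jᶜ hm, compl_compl]
    have hmax : ∀ l ∈ J, M (2 * x m, 2 * x l) = 2 * x l := by
      intro l hl
      have hle := hx l hl m hm
      rw [hM_max _ _ (by rw [abs_sub_comm, abs_of_nonneg (by linarith)]; linarith)]
      exact max_eq_right (by linarith)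
    rw [Finset.sum_congr rfl hmax, lS_apply]
    ring

end Region

lemma sum_single {N : ℕ} (S : Finset (Fin N)) (c : Fin N → ℝ) :
    ∑ k ∈ S, c k • (Pi.single k (1:ℝ) : Fin N → ℝ) = fun i => if i ∈ S then c i else 0 := by
  classical
  funext i
  rw [Finset.sum_apply]
  have hterm : ∀ k ∈ S, (c k • (Pi.single k (1:ℝ) : Fin N → ℝ)) i = if i = k then c k else 0 := by
    intro k _
    rw [Pi.smul_apply, Pi.single_apply, smul_eq_mul]
    split <;> simp
  rw [Finset.sum_congr rfl hterm, Finset.sum_ite_eq]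

/-- With `Φ` as in Statement 7, if the indices split into
nonempty sets `J` and `K = Jᶜ` with `2ρⱼ ≥ 2ρ_k + δ` for all `j ∈ J`, `k ∈ K`,
then there is a vector `λ` vanishing on `J` which the Hessian of `Φ` at `ρ`
maps to the all-ones vector. -/
theorem stmt_9 (δ : ℝ) (hδ : 0 < δ) (M : ℝ × ℝ → ℝ)
    (hM_smooth : ContDiff ℝ (⊤ : ℕ∞) M)
    (hM_convex : ConvexOn ℝ Set.univ M)
    (hM_max : ∀ u v : ℝ, δ ≤ |u - v| → M (u, v) = max u v)
    (hM_shift : ∀ u v a : ℝ, M (u + a, v + a) = M (u, v) + a)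
    (hM_symm : ∀ u v : ℝ, M (u, v) = M (v, u))
    (N : ℕ) (hN : 2 ≤ N)
    (Φ : (Fin N → ℝ) → ℝ)
    (hΦ : ∀ ρ : Fin N → ℝ,
      Φ ρ = ∑ i, Real.exp ((∑ j ∈ Finset.univ.erase i, M (2 * ρ i, 2 * ρ j)) + 2 * ρ i))
    (ρ : Fin N → ℝ) (J : Finset (Fin N)) (hJ : J.Nonempty) (hK : Jᶜ.Nonempty)
    (hgap : ∀ j ∈ J, ∀ k ∈ Jᶜ, 2 * ρ k + δ ≤ 2 * ρ j) :
    ∃ lam : Fin N → ℝ, (∀ j ∈ J, lam j = 0) ∧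
      ∀ i : Fin N,
        ∑ k : Fin N,
          fderiv ℝ (fderiv ℝ Φ) ρ (Pi.single i 1) (Pi.single k 1) * lam k = 1 := by
  classical
  have hΦeq : Φ = Fml M Finset.univ 2 := by
    funext y
    rw [hΦ y]
    rfl
  subst hΦeq
  -- second derivatives of Φ and GG agree at ρ
  have hsecond : fderiv ℝ (fderiv ℝ (Fml M Finset.univ 2)) ρ
      = fderiv ℝ (fderiv ℝ (GG M J)) ρ := by
    set Ro : Set (Fin N → ℝ) := {x | ∀ j ∈ J, ∀ k ∈ Jᶜ, 2 * x k + δ < 2 * x j} with hRo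
    have hRoOpen : IsOpen Ro := by
      have heq : Ro = ⋂ j ∈ J, ⋂ k ∈ Jᶜ, {x : Fin N → ℝ | 2 * x k + δ < 2 * x j} := by
        ext x
        simp only [hRo, Set.mem_setOf_eq, Set.mem_iInter]
      rw [heq]
      refine isOpen_biInter_finset fun j _ => isOpen_biInter_finset fun k _ => ?_
      exact isOpen_lt ((continuous_const.mul (continuous_apply k)).add continuous_const)
        (continuous_const.mul (continuous_apply j))
    have hev1 : ∀ z ∈ Ro, fderiv ℝ (Fml M Finset.univ 2) z = fderiv ℝ (GG M J) z := by
      intro z hz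
      apply Filter.EventuallyEq.fderiv_eq
      filter_upwards [hRoOpen.mem_nhds hz] with y hy
      exact region_eq hδ hM_max J y (fun j hj k hk => (hy j hj k hk).le)
    have hev2 : ∀ z ∈ Ro, fderiv ℝ (fderiv ℝ (Fml M Finset.univ 2)) z
        = fderiv ℝ (fderiv ℝ (GG M J)) z := by
      intro z hz
      apply Filter.EventuallyEq.fderiv_eq
      filter_upwards [hRoOpen.mem_nhds hz] with y hy
      exact hev1 y hy
    set xn : ℕ → (Fin N → ℝ) := fun n => ρ + ((n:ℝ)+1)⁻¹ • oneS J with hxn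
    have hxnRo : ∀ n, xn n ∈ Ro := by
      intro n j hj k hk
      have hpos : (0:ℝ) < ((n:ℝ)+1)⁻¹ := by positivity
      have h1 : xn n k = ρ k := by
        simp only [hxn, Pi.add_apply, Pi.smul_apply, smul_eq_mul, oneS]
        rw [if_neg (Finset.mem_compl.mp hk), mul_zero, add_zero]
      have h2 : xn n j = ρ j + ((n:ℝ)+1)⁻¹ := by
        simp only [hxn, Pi.add_apply, Pi.smul_apply, smul_eq_mul, oneS]
        rw [if_pos hj, mul_one]
      rw [h1, h2]
      have := hgap j hj k hk
      linarith
    have hlim : Filter.Tendsto xn Filter.atTop (nhds ρ) := by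
      have h0 : Filter.Tendsto (fun n : ℕ => ((n:ℝ)+1)⁻¹) Filter.atTop (nhds 0) :=
        tendsto_one_div_add_atTop_nhds_zero_nat.congr (fun n => by rw [one_div])
      have := (h0.smul_const (oneS J)).const_add ρ
      simpa using this
    have hcF : Continuous (fderiv ℝ (fderiv ℝ (Fml M Finset.univ 2))) :=
      (contDiff_fderiv (contDiff_fderiv (contDiff_Fml (N := N) (S := Finset.univ) (c := 2)
        hM_smooth))).continuous
    have hcG : Continuous (fderiv ℝ (fderiv ℝ (GG M J))) :=
      (contDiff_fderiv (contDiff_fderiv (contDiff_GG (J := J) hM_smooth))).continuous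
    have htF : Filter.Tendsto (fun n => fderiv ℝ (fderiv ℝ (Fml M Finset.univ 2)) (xn n))
        Filter.atTop (nhds (fderiv ℝ (fderiv ℝ (Fml M Finset.univ 2)) ρ)) :=
      (hcF.tendsto ρ).comp hlim
    have htG : Filter.Tendsto (fun n => fderiv ℝ (fderiv ℝ (Fml M Finset.univ 2)) (xn n))
        Filter.atTop (nhds (fderiv ℝ (fderiv ℝ (GG M J)) ρ)) := by
      apply ((hcG.tendsto ρ).comp hlim).congr
      intro n
      exact (hev2 (xn n) (hxnRo n)).symm
    exact tendsto_nhds_unique htF htG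
  -- matrix on K = Jᶜ
  set H : Fin N → Fin N → ℝ := fun i k =>
    fderiv ℝ (fderiv ℝ (Fml M Finset.univ 2)) ρ (Pi.single i 1) (Pi.single k 1) with hHdef
  set B : Matrix ↥(Jᶜ) ↥(Jᶜ) ℝ := fun i k => H i.val k.val with hBdef
  have hsingleK : ∀ k : Fin N, k ∈ Jᶜ → ∀ j ∈ J, (Pi.single k (1:ℝ) : Fin N → ℝ) j = 0 := by
    intro k hk j hj
    apply Pi.single_eq_of_ne
    intro h
    subst h
    exact (Finset.mem_compl.mp hk) hj
  -- injectivity of B.mulVec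
  have hinj : ∀ v : ↥(Jᶜ) → ℝ, B.mulVec v = 0 → v = 0 := by
    intro v hv
    set ev : Fin N → ℝ := fun i => if h : i ∈ Jᶜ then v ⟨i, h⟩ else 0 with hevdef
    have hevJ : ∀ j ∈ J, ev j = 0 := by
      intro j hj
      rw [hevdef]
      simp only
      rw [dif_neg (fun h => (Finset.mem_compl.mp h) hj)]
    have hevsum : ev = ∑ k ∈ Jᶜ, ev k • (Pi.single k (1:ℝ) : Fin N → ℝ) := by
      rw [sum_single]
      funext i
      by_cases hi : i ∈ Jᶜ
      · rw [if_pos hi]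
      · rw [if_neg hi, hevdef]
        simp only
        rw [dif_neg hi]
    -- quadratic form vanishes
    set D := fderiv ℝ (fderiv ℝ (Fml M Finset.univ 2)) ρ with hDdef
    have h2 : ∀ u : Fin N → ℝ, D u ev = ∑ k ∈ Jᶜ, ev k * D u (Pi.single k 1) := by
      intro u
      conv_lhs => rw [hevsum]
      rw [map_sum]
      exact Finset.sum_congr rfl fun k _ => by rw [map_smul, smul_eq_mul]
    have hrow : ∀ i ∈ Jᶜ, ∑ k ∈ Jᶜ, ev k * D (Pi.single i 1) (Pi.single k 1) = 0 := by
      intro i hi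
      have hconv : ∑ k ∈ Jᶜ, ev k * D (Pi.single i 1) (Pi.single k 1)
          = ∑ k : ↥(Jᶜ), B ⟨i, hi⟩ k * v k := by
        rw [← Finset.sum_coe_sort (Jᶜ) (fun k => ev k * D (Pi.single i 1) (Pi.single k 1))]
        refine Finset.sum_congr rfl fun k _ => ?_
        have hev : ev k.val = v k := by
          rw [hevdef]
          simp only
          rw [dif_pos k.prop]
        rw [hev, hBdef, mul_comm]
      rw [hconv]
      have := congrFun hv ⟨i, hi⟩
      rw [Matrix.mulVec] at this
      exact this
    have hQ : D ev ev = 0 := by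
      have h1 : D ev = ∑ i ∈ Jᶜ, ev i • D (Pi.single i 1) := by
        conv_lhs => rw [hevsum]
        rw [map_sum]
        exact Finset.sum_congr rfl fun i _ => by rw [map_smul]
      calc D ev ev = (∑ i ∈ Jᶜ, ev i • D (Pi.single i 1)) ev := by rw [h1]
        _ = ∑ i ∈ Jᶜ, ev i * (D (Pi.single i 1) ev) := by
            rw [ContinuousLinearMap.sum_apply]
            exact Finset.sum_congr rfl fun i _ => by
              rw [ContinuousLinearMap.smul_apply, smul_eq_mul]
        _ = ∑ i ∈ Jᶜ, ev i * ∑ k ∈ Jᶜ, ev k * D (Pi.single i 1) (Pi.single k 1) :=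
            Finset.sum_congr rfl fun i _ => by rw [h2]
        _ = 0 := Finset.sum_eq_zero fun i hi => by rw [hrow i hi, mul_zero]
    -- transfer to Ψ
    have hQG : fderiv ℝ (fderiv ℝ (GG M J)) ρ ev ev = 0 := by
      rw [← hsecond]
      exact hQ
    rw [fderiv2_GG_KK hM_smooth ρ ev ev hevJ hevJ] at hQG
    have hQΨ : fderiv ℝ (fderiv ℝ (Fml M Jᶜ 2)) ρ ev ev = 0 := by
      rcases mul_eq_zero.mp hQG with h | h
      · exact absurd h (Real.exp_ne_zero _)
      · exact h
    -- each directional derivative vanishes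
    have hqf := qform_Fml (S := Jᶜ) (c := 2) hM_smooth hM_convex ρ ev
    rw [hQΨ] at hqf
    have hterms : ∀ m ∈ Jᶜ, Dgml M (Jᶜ) 2 m ρ ev = 0 := by
      intro m hm
      have hnn : ∀ m ∈ Jᶜ, 0 ≤ Real.exp (gml M (Jᶜ) 2 m ρ) * (Dgml M (Jᶜ) 2 m ρ ev) ^ 2 :=
        fun m _ => mul_nonneg (Real.exp_pos _).le (sq_nonneg _)
      have hz := (Finset.sum_eq_zero_iff_of_nonneg hnn).mp
        (le_antisymm hqf (Finset.sum_nonneg hnn)) m hm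
      rcases mul_eq_zero.mp hz with h | h
      · exact absurd h (Real.exp_ne_zero _)
      · exact pow_eq_zero_iff (by norm_num) |>.mp h
    have hev0 : ev = 0 := kernel_lemma hM_smooth hδ hM_convex hM_max hM_shift hM_symm
      (le_refl 2) ρ ev (fun m hm => by rw [hevdef]; simp only; rw [dif_neg hm]) hterms
    funext k
    have := congrFun hev0 k.val
    rw [hevdef] at this
    simp only [dif_pos k.prop, Subtype.coe_eta, Pi.zero_apply] at this
    rw [this]
    rfl
  -- surjectivity
  have hsurj : Function.Surjective (Matrix.mulVecLin B) := by
    rw [← LinearMap.injective_iff_surjective]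
    intro a b hab
    have hzero : B.mulVec (a - b) = 0 := by
      rw [show B.mulVec (a - b) = Matrix.mulVecLin B (a - b) from rfl, map_sub]
      rw [show Matrix.mulVecLin B a = Matrix.mulVecLin B b from hab]
      exact sub_self _
    have := hinj (a - b) hzero
    exact sub_eq_zero.mp this
  obtain ⟨w, hw⟩ := hsurj 1
  set lam : Fin N → ℝ := fun i => if h : i ∈ Jᶜ then w ⟨i, h⟩ else 0 with hlam
  have hlamJ : ∀ j ∈ J, lam j = 0 := by
    intro j hj
    rw [hlam]
    simp only
    rw [dif_neg (fun h => (Finset.mem_compl.mp h) hj)]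
  refine ⟨lam, hlamJ, ?_⟩
  intro i
  -- reduce to sum over Jᶜ
  have hreduce : ∑ k : Fin N, H i k * lam k = ∑ k ∈ Jᶜ, H i k * lam k := by
    symm
    apply Finset.sum_subset (Finset.subset_univ _)
    intro k _ hk
    rw [hlam]
    simp only
    rw [dif_neg hk, mul_zero]
  -- the K-rows give 1 directly
  have h2le : ((2:WithTop ℕ∞)) ≤ ((⊤:ℕ∞) : WithTop ℕ∞) := by
    rw [show ((2:WithTop ℕ∞)) = ((2:ℕ∞) : WithTop ℕ∞) by rfl]
    exact WithTop.coe_le_coe.mpr le_top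
  have hKcase : ∀ i' ∈ Jᶜ, ∑ k ∈ Jᶜ, H i' k * lam k = 1 := by
    intro i' hi'
    have hconv : ∑ k ∈ Jᶜ, H i' k * lam k = ∑ k : ↥(Jᶜ), B ⟨i', hi'⟩ k * w k := by
      rw [← Finset.sum_coe_sort (Jᶜ) (fun k => H i' k * lam k)]
      refine Finset.sum_congr rfl fun k _ => ?_
      have hl : lam k.val = w k := by
        rw [hlam]
        simp only
        rw [dif_pos k.prop]
      rw [hl, hBdef]
    rw [hconv]
    have hthis := congrFun hw ⟨i', hi'⟩
    rw [Matrix.mulVecLin_apply, Matrix.mulVec] at hthis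
    exact hthis
  rw [hreduce]
  by_cases hi : i ∈ Jᶜ
  · exact hKcase i hi
  · have hiJ : i ∈ J := by rwa [Finset.mem_compl, not_not] at hi
    set Ψ := Fml M (Jᶜ) 2 with hΨdef
    set P : Fin N → ℝ := fun k => EE J ρ * fderiv ℝ Ψ ρ (Pi.single k 1) with hPdef
    have hPk : ∀ k ∈ Jᶜ, H i k = 2 * P k := by
      intro k hk
      rw [hHdef]
      simp only
      rw [hsecond]
      exact fderiv2_GG_JK hM_smooth ρ (Pi.single k 1) (hsingleK k hk) i hiJ
    have hKrow : ∀ i' ∈ Jᶜ, ∀ k ∈ Jᶜ, H i' k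
        = EE J ρ * fderiv ℝ (fderiv ℝ Ψ) ρ (Pi.single i' 1) (Pi.single k 1) := by
      intro i' hi' k hk
      rw [hHdef]
      simp only
      rw [hsecond]
      exact fderiv2_GG_KK hM_smooth ρ _ _ (hsingleK i' hi') (hsingleK k hk)
    have hcolsum : ∀ k ∈ Jᶜ,
        ∑ i' ∈ Jᶜ, fderiv ℝ (fderiv ℝ Ψ) ρ (Pi.single i' 1) (Pi.single k 1)
        = 2 * (Jᶜ.card : ℝ) * fderiv ℝ Ψ ρ (Pi.single k 1) := by
      intro k hk
      have hsym : ∀ i' : Fin N, fderiv ℝ (fderiv ℝ Ψ) ρ (Pi.single i' 1) (Pi.single k 1)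
          = fderiv ℝ (fderiv ℝ Ψ) ρ (Pi.single k 1) (Pi.single i' 1) := fun i' =>
        ((contDiff_Fml (S := Jᶜ) (c := 2) hM_smooth).contDiffAt).isSymmSndFDerivAt (by rw [minSmoothness_of_isRCLikeNormedField]; exact h2le) _ _
      rw [Finset.sum_congr rfl (fun i' _ => hsym i'), ← map_sum]
      have hone : (∑ i' ∈ Jᶜ, (Pi.single i' (1:ℝ) : Fin N → ℝ)) = oneS (Jᶜ) := by
        have h := sum_single (N := N) (Jᶜ) (fun _ => (1:ℝ))
        simp only [one_smul] at h
        rw [h]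
        rfl
      rw [hone, hΨdef, fderiv2_Fml_oneS hM_smooth hM_shift]
      ring
    have hcardpos : (0:ℝ) < (Jᶜ.card : ℝ) :=
      Nat.cast_pos.mpr (Finset.card_pos.mpr hK)
    have htot : (Jᶜ.card : ℝ) * ∑ k ∈ Jᶜ, H i k * lam k = (Jᶜ.card : ℝ) * 1 := by
      calc (Jᶜ.card : ℝ) * ∑ k ∈ Jᶜ, H i k * lam k
          = ∑ k ∈ Jᶜ, ((Jᶜ.card : ℝ) * (2 * P k)) * lam k := by
            rw [Finset.mul_sum]
            refine Finset.sum_congr rfl fun k hk => ?_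
            rw [hPk k hk]
            ring
        _ = ∑ k ∈ Jᶜ, (∑ i' ∈ Jᶜ, H i' k) * lam k := by
            refine Finset.sum_congr rfl fun k hk => ?_
            congr 1
            rw [Finset.sum_congr rfl (fun i' hi' => hKrow i' hi' k hk), ← Finset.mul_sum,
              hcolsum k hk, hPdef]
            ring
        _ = ∑ k ∈ Jᶜ, ∑ i' ∈ Jᶜ, H i' k * lam k := by
            refine Finset.sum_congr rfl fun k _ => ?_
            rw [Finset.sum_mul]
        _ = ∑ i' ∈ Jᶜ, ∑ k ∈ Jᶜ, H i' k * lam k := Finset.sum_comm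
        _ = ∑ i' ∈ Jᶜ, (1:ℝ) := Finset.sum_congr rfl (fun i' hi' => hKcase i' hi')
        _ = (Jᶜ.card : ℝ) * 1 := by rw [Finset.sum_const, nsmul_eq_mul]
    exact mul_left_cancel₀ (ne_of_gt hcardpos) htot
end

section
/- Let n ≥ 1, let P_ℤ ⊂ ℤ^n be a finite set whose convex hull has nonempty interior in ℝ^n, let ν : P_ℤ → ℝ, let δ' ≥ 0, and let m : (P_ℤ → ℝ) → ℝ be a concave function satisfying m(u + a·𝟙) = m(u) + a for all a ∈ ℝ and min_α u(α) − δ' ≤ m(u) ≤ min_α u(α) for all u. For (ξ, η) ∈ ℝ^n × ℝ define μ_α(ξ,η) = η − ⟨α, ξ⟩ + ν(α) for each α ∈ P_ℤ, and H(ξ,η) = Σ_{α ∈ P_ℤ} μ_α(ξ,η) − |P_ℤ| · m((μ_α(ξ,η))_{α∈P_ℤ}). Then: (i) H(ξ,η) = H(ξ,η') for all η, η' ∈ ℝ (H depends only on ξ); (ii) H is a convex function of (ξ,η); (iii) H ≥ 0 everywhere; (iv) there exist constants c > 0 and C > 0 such that c‖ξ‖ − C ≤ H(ξ,η) ≤ C(‖ξ‖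 + 1) for all (ξ,η) (H is proper with linear growth in ξ). -/
open scoped RealInnerProductSpace

/-- Properties of the wrapping Hamiltonian
`H(ξ,η) = Σ_α μ_α(ξ,η) − |P_ℤ|·m((μ_α(ξ,η))_α)`, where
`μ_α(ξ,η) = η − ⟨α,ξ⟩ + ν(α)` and `m` is a smoothed minimum:
`H` depends only on `ξ`, is convex, nonnegative, proper and of linear growth. -/
theorem stmt_13 (n : ℕ) (hn : 1 ≤ n)
    (ι : Type) [Fintype ι] [Nonempty ι]
    (α : ι → EuclideanSpace ℝ (Fin n))
    (hα_int : ∀ j i, ∃ z : ℤ, α j i = (z : ℝ))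
    (hhull : (interior (convexHull ℝ (Set.range α))).Nonempty)
    (ν : ι → ℝ) (δ' : ℝ) (hδ' : 0 ≤ δ')
    (m : (ι → ℝ) → ℝ) (hm_concave : ConcaveOn ℝ Set.univ m)
    (hm_shift : ∀ (u : ι → ℝ) (a : ℝ), m (fun j => u j + a) = m u + a)
    (hm_min : ∀ u : ι → ℝ,
      Finset.univ.inf' Finset.univ_nonempty u - δ' ≤ m u ∧
        m u ≤ Finset.univ.inf' Finset.univ_nonempty u)
    (μ : ι → EuclideanSpace ℝ (Fin n) → ℝ → ℝ)
    (hμ : ∀ j ξ η, μ j ξ η = η - ⟪α j, ξ⟫ + ν j)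
    (H : EuclideanSpace ℝ (Fin n) → ℝ → ℝ)
    (hH : ∀ ξ η, H ξ η =
      (∑ j, μ j ξ η) - (Fintype.card ι : ℝ) * m fun j => μ j ξ η) :
    (∀ ξ η η', H ξ η = H ξ η') ∧
    ConvexOn ℝ Set.univ (fun p : EuclideanSpace ℝ (Fin n) × ℝ => H p.1 p.2) ∧
    (∀ ξ η, 0 ≤ H ξ η) ∧
    ∃ c C : ℝ, 0 < c ∧ 0 < C ∧
      ∀ ξ η, c * ‖ξ‖ - C ≤ H ξ η ∧ H ξ η ≤ C * (‖ξ‖ + 1) := by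
  classical
  set N : ℝ := (Fintype.card ι : ℝ) with hNdef
  have hN1 : (1:ℝ) ≤ N := by
    rw [hNdef]
    exact Nat.one_le_cast.mpr Fintype.card_pos
  have hN0 : (0:ℝ) ≤ N := by linarith
  -- Part (i): H depends only on ξ
  have part1 : ∀ ξ η η', H ξ η = H ξ η' := by
    intro ξ η η'
    have h1 : (fun j => μ j ξ η') = fun j => (fun j => μ j ξ η) j + (η' - η) := by
      funext j; simp only [hμ]; ring
    rw [hH, hH, h1, hm_shift]
    simp only [Finset.sum_add_distrib, Finset.sum_const, Finset.card_univ, nsmul_eq_mul]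
    ring
  -- convexity
  have part2 : ConvexOn ℝ Set.univ (fun p : EuclideanSpace ℝ (Fin n) × ℝ => H p.1 p.2) := by
    refine ⟨convex_univ, ?_⟩
    intro p _ q _ a b ha hb hab
    have hcomb : (fun j => μ j (a • p + b • q).1 (a • p + b • q).2)
        = a • (fun j => μ j p.1 p.2) + b • (fun j => μ j q.1 q.2) := by
      funext j
      simp only [hμ, Prod.fst_add, Prod.snd_add, Prod.smul_fst, Prod.smul_snd,
        inner_add_right, real_inner_smul_right, Pi.add_apply, Pi.smul_apply, smul_eq_mul]
      linear_combination (-ν j) * hab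
    have hmge : a * m (fun j => μ j p.1 p.2) + b * m (fun j => μ j q.1 q.2)
        ≤ m (fun j => μ j (a • p + b • q).1 (a • p + b • q).2) := by
      rw [hcomb]
      exact hm_concave.2 (Set.mem_univ _) (Set.mem_univ _) ha hb hab
    have hsum : (∑ j, μ j (a • p + b • q).1 (a • p + b • q).2)
        = a * (∑ j, μ j p.1 p.2) + b * (∑ j, μ j q.1 q.2) := by
      have := congrFun hcomb
      simp only [Pi.add_apply, Pi.smul_apply, smul_eq_mul] at this
      rw [Finset.sum_congr rfl (fun j _ => this j), Finset.sum_add_distrib,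
        ← Finset.mul_sum, ← Finset.mul_sum]
    simp only [smul_eq_mul, hH]
    rw [hsum]
    nlinarith [mul_le_mul_of_nonneg_left hmge hN0]
  -- lower estimate on H via the inf
  have key_low : ∀ ξ η,
      (∑ j, μ j ξ η) - N * Finset.univ.inf' Finset.univ_nonempty (fun j => μ j ξ η)
        ≤ H ξ η := by
    intro ξ η
    rw [hH]
    have h2 := (hm_min (fun j => μ j ξ η)).2
    nlinarith
  have key_up : ∀ ξ η, H ξ η ≤
      (∑ j, μ j ξ η) - N * Finset.univ.inf' Finset.univ_nonempty (fun j => μ j ξ η)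
        + N * δ' := by
    intro ξ η
    rw [hH]
    have h2 := (hm_min (fun j => μ j ξ η)).1
    nlinarith
  -- part (iii)
  have part3 : ∀ ξ η, 0 ≤ H ξ η := by
    intro ξ η
    refine le_trans ?_ (key_low ξ η)
    have h2 : N * Finset.univ.inf' Finset.univ_nonempty (fun j => μ j ξ η)
        ≤ ∑ j, μ j ξ η := by
      calc N * Finset.univ.inf' Finset.univ_nonempty (fun j => μ j ξ η)
          = ∑ _j : ι, Finset.univ.inf' Finset.univ_nonempty (fun j => μ j ξ η) := by
            rw [Finset.sum_const, Finset.card_univ, nsmul_eq_mul]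
        _ ≤ ∑ j, μ j ξ η :=
            Finset.sum_le_sum fun j _ => Finset.inf'_le _ (Finset.mem_univ j)
    linarith
  -- geometry: width of the hull
  obtain ⟨x₀, hx₀⟩ := hhull
  obtain ⟨ε, hε, hball⟩ := Metric.isOpen_iff.1 isOpen_interior x₀ hx₀
  have hball' : Metric.ball x₀ ε ⊆ convexHull ℝ (Set.range α) :=
    hball.trans interior_subset
  have hlin : ∀ ξ : EuclideanSpace ℝ (Fin n),
      IsLinearMap ℝ (fun y : EuclideanSpace ℝ (Fin n) => (⟪y, ξ⟫ : ℝ)) := fun ξ =>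
    ⟨fun a b => inner_add_left a b ξ, fun c a => real_inner_smul_left a ξ c⟩
  have hsup : ∀ (ξ : EuclideanSpace ℝ (Fin n)), ∀ x ∈ convexHull ℝ (Set.range α),
      (⟪x, ξ⟫ : ℝ) ≤ Finset.univ.sup' Finset.univ_nonempty (fun j => (⟪α j, ξ⟫ : ℝ)) := by
    intro ξ x hx
    refine convexHull_min ?_ (convex_halfSpace_le (hlin ξ) _) hx
    rintro y ⟨j, rfl⟩
    exact Set.mem_setOf.2 (Finset.le_sup' (fun j => (⟪α j, ξ⟫ : ℝ)) (Finset.mem_univ j))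
  have hinf : ∀ (ξ : EuclideanSpace ℝ (Fin n)), ∀ x ∈ convexHull ℝ (Set.range α),
      Finset.univ.inf' Finset.univ_nonempty (fun j => (⟪α j, ξ⟫ : ℝ)) ≤ ⟪x, ξ⟫ := by
    intro ξ x hx
    refine convexHull_min ?_ (convex_halfSpace_ge (hlin ξ) _) hx
    rintro y ⟨j, rfl⟩
    exact Set.mem_setOf.2 (Finset.inf'_le (fun j => (⟪α j, ξ⟫ : ℝ)) (Finset.mem_univ j))
  have hwidth : ∀ ξ : EuclideanSpace ℝ (Fin n),
      ε * ‖ξ‖ ≤ Finset.univ.sup' Finset.univ_nonempty (fun j => (⟪α j, ξ⟫ : ℝ))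
        - Finset.univ.inf' Finset.univ_nonempty (fun j => (⟪α j, ξ⟫ : ℝ)) := by
    intro ξ
    rcases eq_or_ne ξ 0 with rfl | hξ
    · simp [Finset.sup'_const, Finset.inf'_const]
    · have hnξ : (0:ℝ) < ‖ξ‖ := norm_pos_iff.2 hξ
      set v : EuclideanSpace ℝ (Fin n) := (ε / 2) • ‖ξ‖⁻¹ • ξ with hv
      have hvnorm : ‖v‖ = ε / 2 := by
        rw [hv, norm_smul, norm_smul, norm_inv, norm_norm]
        rw [Real.norm_eq_abs, abs_of_pos (by linarith)]
        field_simp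
      have hvin : (⟪v, ξ⟫ : ℝ) = (ε / 2) * ‖ξ‖ := by
        rw [hv, real_inner_smul_left, real_inner_smul_left, real_inner_self_eq_norm_sq]
        field_simp
      have h1 : x₀ + v ∈ Metric.ball x₀ ε := by
        rw [Metric.mem_ball, dist_eq_norm]
        simp [hvnorm]
        linarith
      have h2 : x₀ - v ∈ Metric.ball x₀ ε := by
        rw [Metric.mem_ball, dist_eq_norm]
        simp [hvnorm]
        linarith
      have h3 := hsup ξ _ (hball' h1)
      have h4 := hinf ξ _ (hball' h2)
      rw [inner_add_left, hvin] at h3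
      rw [inner_sub_left, hvin] at h4
      linarith
  -- constants
  set A : ℝ := Finset.univ.sup' Finset.univ_nonempty (fun j => ‖α j‖) with hA
  set B : ℝ := Finset.univ.sup' Finset.univ_nonempty (fun j => |ν j|) with hB
  obtain ⟨j₀⟩ := ‹Nonempty ι›
  have hA0 : 0 ≤ A := le_trans (norm_nonneg (α j₀)) (Finset.le_sup' (fun j => ‖α j‖) (Finset.mem_univ j₀))
  have hB0 : 0 ≤ B := le_trans (abs_nonneg (ν j₀)) (Finset.le_sup' (fun j => |ν j|) (Finset.mem_univ j₀))
  have hAb : ∀ j, ‖α j‖ ≤ A := fun j => Finset.le_sup' (fun j => ‖α j‖) (Finset.mem_univ j)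
  have hBb : ∀ j, |ν j| ≤ B := fun j => Finset.le_sup' (fun j => |ν j|) (Finset.mem_univ j)
  have hinner_bound : ∀ j (ξ : EuclideanSpace ℝ (Fin n)), |(⟪α j, ξ⟫ : ℝ)| ≤ A * ‖ξ‖ := by
    intro j ξ
    refine le_trans (abs_real_inner_le_norm _ _) ?_
    exact mul_le_mul_of_nonneg_right (hAb j) (norm_nonneg ξ)
  refine ⟨part1, part2, part3, ε, N * (2*A + 2*B + δ') + 2*B + 1, hε, by nlinarith, ?_⟩
  intro ξ η
  set C : ℝ := N * (2*A + 2*B + δ') + 2*B + 1 with hC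
  constructor
  · -- lower bound
    obtain ⟨j, -, hj⟩ := Finset.exists_mem_eq_sup' (Finset.univ_nonempty (α := ι))
      (fun j => (⟪α j, ξ⟫ : ℝ))
    obtain ⟨k, -, hk⟩ := Finset.exists_mem_eq_inf' (Finset.univ_nonempty (α := ι))
      (fun j => (⟪α j, ξ⟫ : ℝ))
    have hw := hwidth ξ
    rw [hj, hk] at hw
    -- μ k - μ j ≥ ε‖ξ‖ - 2B
    have hμkj : ε * ‖ξ‖ - 2 * B ≤ μ k ξ η - μ j ξ η := by
      have h1 := abs_le.1 (hBb j)
      have h2 := abs_le.1 (hBb k)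
      simp only [hμ]
      linarith
    set I := Finset.univ.inf' Finset.univ_nonempty (fun j => μ j ξ η) with hI
    have hIj : I ≤ μ j ξ η := Finset.inf'_le _ (Finset.mem_univ j)
    have hsingle : μ k ξ η - I ≤ ∑ l, (μ l ξ η - I) := by
      refine Finset.single_le_sum (f := fun l => μ l ξ η - I) (fun l _ => ?_) (Finset.mem_univ k)
      have hle : I ≤ μ l ξ η := Finset.inf'_le _ (Finset.mem_univ l)
      show 0 ≤ μ l ξ η - I
      linarith
    have hsumI : (∑ l, (μ l ξ η - I)) = (∑ l, μ l ξ η) - N * I := by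
      rw [Finset.sum_sub_distrib, Finset.sum_const, Finset.card_univ, nsmul_eq_mul]
    have hKL := key_low ξ η
    rw [← hI] at hKL
    have : ε * ‖ξ‖ - 2 * B ≤ H ξ η := by
      rw [hsumI] at hsingle
      linarith
    have hC2B : 2 * B ≤ C := by rw [hC]; nlinarith
    linarith
  · -- upper bound
    obtain ⟨k₀, -, hk₀⟩ := Finset.exists_mem_eq_inf' (Finset.univ_nonempty (α := ι))
      (fun j => μ j ξ η)
    have hKU := key_up ξ η
    set I := Finset.univ.inf' Finset.univ_nonempty (fun j => μ j ξ η) with hI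
    have hterm : ∀ l, μ l ξ η ≤ I + (2 * A * ‖ξ‖ + 2 * B) := by
      intro l
      have h1 := abs_le.1 (hinner_bound l ξ)
      have h2 := abs_le.1 (hinner_bound k₀ ξ)
      have h3 := abs_le.1 (hBb l)
      have h4 := abs_le.1 (hBb k₀)
      have hIk : I = μ k₀ ξ η := hk₀
      rw [hIk, hμ, hμ]
      linarith
    have hsum : (∑ l, μ l ξ η) ≤ N * I + N * (2 * A * ‖ξ‖ + 2 * B) := by
      calc (∑ l, μ l ξ η) ≤ ∑ _l : ι, (I + (2 * A * ‖ξ‖ + 2 * B)) :=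
            Finset.sum_le_sum fun l _ => hterm l
        _ = N * I + N * (2 * A * ‖ξ‖ + 2 * B) := by
            rw [Finset.sum_const, Finset.card_univ, nsmul_eq_mul]; ring
    have hnorm0 : (0:ℝ) ≤ ‖ξ‖ := norm_nonneg ξ
    have : H ξ η ≤ N * (2 * A * ‖ξ‖ + 2 * B) + N * δ' := by linarith
    rw [hC]
    nlinarith [mul_nonneg hA0 hnorm0, mul_nonneg hB0 hnorm0, mul_nonneg (mul_nonneg hN0 hB0) hnorm0, mul_nonneg (mul_nonneg hN0 hδ') hnorm0]
end

section
/- Let K be the field of Hahn series over ℂ with value group ℝ (series with complex coefficients, real exponents, and well-ordered support), and for nonzero u ∈ K write ord(u) ∈ ℝ for the least exponent in its support. Fix a real λ > 0, a finite nonempty index set A, and a ∈ (K∖{0})^A with ord(a_α) = 0 for all α ∈ A. Let E : A → ((A → K) → K) be a family of maps such that: (i) for every α and every u : A → K, either E_α(u) = 0 or ord(E_α(u)) ≥ λ; and (ii) for every α, every c ≥ 0, and all u, v : A → K such that for each β either u_β = v_β or ord(u_β − v_β) ≥ c, one has either E_α(u) = E_α(v) or ord(E_α(u) − E_α(v)) ≥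 c + λ. Then there exists a unique u : A → K such that for every α ∈ A, u_α ≠ 0, ord(u_α) = 0, and u_α · (1 + E_α(u)) = a_α. -/
open HahnSeries

private abbrev K17 := HahnSeries ℝ ℂ

/-- "x and y agree below c" reformulation of order of difference. -/
private lemma close_iff17 (c : ℝ) (x y : K17) :
    (x = y ∨ c ≤ (x - y).order) ↔ ∀ γ < c, x.coeff γ = y.coeff γ := by
  constructor
  · rintro (rfl | h) γ hγ
    · rfl
    · have h0 := HahnSeries.coeff_eq_zero_of_lt_order (x := x - y) (lt_of_lt_of_le hγ h)
      rw [HahnSeries.coeff_sub] at h0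
      exact sub_eq_zero.mp h0
  · intro h
    rcases eq_or_ne x y with rfl | hne
    · exact Or.inl rfl
    · right
      by_contra hlt
      push_neg at hlt
      have hxy : x - y ≠ 0 := sub_ne_zero.mpr hne
      apply HahnSeries.coeff_order_eq_zero.not.mpr hxy
      rw [HahnSeries.coeff_sub, h _ hlt, sub_self]

private lemma Nlt17 (lam : ℝ) (hlam : 0 < lam) (γ : ℝ) (n : ℕ)
    (h : ⌈γ / lam⌉₊ + 1 ≤ n) : γ < n * lam := by
  have h1 : γ / lam ≤ (⌈γ / lam⌉₊ : ℝ) := Nat.le_ceil _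
  have h2 : ((⌈γ / lam⌉₊ : ℝ) + 1) ≤ (n : ℝ) := by exact_mod_cast h
  have h3 : γ ≤ (⌈γ / lam⌉₊ : ℝ) * lam := by
    have := mul_le_mul_of_nonneg_right h1 hlam.le
    rwa [div_mul_cancel₀ γ (ne_of_gt hlam)] at this
  nlinarith

/-- the coefficientwise limit of a "Cauchy" sequence of Hahn series. -/
private noncomputable def hahnLimit17 (lam : ℝ) (hlam : 0 < lam) (s : ℕ → K17)
    (hs : ∀ (γ : ℝ) (m n : ℕ), ⌈γ / lam⌉₊ + 1 ≤ m → ⌈γ / lam⌉₊ + 1 ≤ n →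
      (s m).coeff γ = (s n).coeff γ) : K17 where
  coeff γ := (s (⌈γ / lam⌉₊ + 1)).coeff γ
  isPWO_support' := by
    apply Set.IsWF.isPWO
    rw [Set.isWF_iff_no_descending_seq]
    intro f hf hmem
    have key : ∀ n, f n ∈ (s (⌈f 0 / lam⌉₊ + 1)).support := by
      intro n
      have h1 : ⌈f n / lam⌉₊ + 1 ≤ ⌈f 0 / lam⌉₊ + 1 := by
        have : f n / lam ≤ f 0 / lam := by
          gcongr
          exact hf.antitone (Nat.zero_le n)
        exact Nat.add_le_add_right (Nat.ceil_le_ceil this) 1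
      have hm := hmem n
      simp only [Function.mem_support] at hm
      rw [HahnSeries.mem_support]
      have hm' : (s (⌈f n / lam⌉₊ + 1)).coeff (f n) ≠ 0 := hm
      rwa [hs (f n) _ _ le_rfl h1] at hm'
    exact Set.isWF_iff_no_descending_seq.mp (s _).isWF_support f hf key

private lemma hahnLimit17_coeff (lam : ℝ) (hlam : 0 < lam) (s : ℕ → K17)
    (hs : ∀ (γ : ℝ) (m n : ℕ), ⌈γ / lam⌉₊ + 1 ≤ m → ⌈γ / lam⌉₊ + 1 ≤ n →
      (s m).coeff γ = (s n).coeff γ)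
    (γ : ℝ) (n : ℕ) (h : ⌈γ / lam⌉₊ + 1 ≤ n) :
    (hahnLimit17 lam hlam s hs).coeff γ = (s n).coeff γ :=
  hs γ _ n le_rfl h

/-- A fixed-point statement over the Hahn series field
`K = HahnSeries ℝ ℂ`: given unitary target coefficients `a_α` (nonzero, of
order `0`) and correction maps `E_α` which raise order by at least `λ > 0` and
are `λ`-contracting, there is a unique solution `u` of the system
`u_α · (1 + E_α(u)) = a_α` with all `u_α` nonzero of order `0`. -/
theorem stmt_17 (lam : ℝ) (hlam : 0 < lam)
    (A : Type) [Fintype A] [Nonempty A]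
    (a : A → HahnSeries ℝ ℂ) (ha : ∀ α, a α ≠ 0 ∧ (a α).order = 0)
    (E : A → (A → HahnSeries ℝ ℂ) → HahnSeries ℝ ℂ)
    (hE1 : ∀ α u, E α u = 0 ∨ lam ≤ (E α u).order)
    (hE2 : ∀ (α : A) (c : ℝ), 0 ≤ c → ∀ u v : A → HahnSeries ℝ ℂ,
      (∀ β, u β = v β ∨ c ≤ (u β - v β).order) →
      (E α u = E α v ∨ c + lam ≤ (E α u - E α v).order)) :
    ∃! u : A → HahnSeries ℝ ℂ,
      ∀ α, u α ≠ 0 ∧ (u α).order = 0 ∧ u α * (1 + E α u) = a α := by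
  classical
  -- Step A : 1 + E α u is a unit of order 0
  have hunit : ∀ u α, (1 + E α u) ≠ 0 ∧ (1 + E α u).order = 0 := by
    intro u α
    have hcoeff : (1 + E α u).coeff 0 = 1 := by
      rcases hE1 α u with h | h
      · simp [h]
      · have hEo : (0:ℝ) < (E α u).order := lt_of_lt_of_le hlam h
        rw [HahnSeries.coeff_add, HahnSeries.coeff_one,
          HahnSeries.coeff_eq_zero_of_lt_order hEo]
        simp
    have hne : (1 + E α u) ≠ 0 :=
      HahnSeries.ne_zero_of_coeff_ne_zero (by rw [hcoeff]; exact one_ne_zero)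
    refine ⟨hne, le_antisymm
      (HahnSeries.order_le_of_coeff_ne_zero (by rw [hcoeff]; exact one_ne_zero)) ?_⟩
    rcases hE1 α u with h | h
    · rw [h, add_zero, HahnSeries.order_one]
    · have hmin := HahnSeries.min_order_le_order_add (x := (1 : K17)) (y := E α u) hne
      rw [HahnSeries.order_one] at hmin
      exact le_trans (le_min le_rfl (le_trans hlam.le h)) hmin
  -- Step B : order of inverses
  have hinv : ∀ x : K17, x ≠ 0 → x⁻¹ ≠ 0 ∧ x⁻¹.order = -x.order := by
    intro x hx
    have hxi : x⁻¹ ≠ 0 := inv_ne_zero hx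
    refine ⟨hxi, ?_⟩
    have h := HahnSeries.order_mul hx hxi
    rw [mul_inv_cancel₀ hx, HahnSeries.order_one] at h
    linarith
  -- the Picard map and its iterates
  obtain ⟨T, hTdef⟩ : ∃ T : (A → K17) → (A → K17),
      ∀ u α, T u α = a α * (1 + E α u)⁻¹ := ⟨_, fun u α => rfl⟩
  obtain ⟨s, hs0, hssucc⟩ : ∃ s : ℕ → A → K17, s 0 = a ∧ ∀ n, s (n+1) = T (s n) :=
    ⟨fun n => T^[n] a, rfl, fun n => Function.iterate_succ_apply' T n a⟩
  -- Step C : values of T are nonzero of order 0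
  have hTprop : ∀ u α, T u α ≠ 0 ∧ (T u α).order = 0 := by
    intro u α
    rw [hTdef]
    obtain ⟨hne, hord⟩ := hunit u α
    obtain ⟨hne', hord'⟩ := hinv _ hne
    refine ⟨mul_ne_zero (ha α).1 hne', ?_⟩
    rw [HahnSeries.order_mul (ha α).1 hne', (ha α).2, hord', hord]
    simp
  have hord_s : ∀ n β, s n β ≠ 0 ∧ (s n β).order = 0 := by
    intro n β
    cases n with
    | zero => rw [hs0]; exact ⟨(ha β).1, (ha β).2⟩
    | succ n => rw [hssucc]; exact hTprop (s n) β
  -- Step D : contraction property of T, in coefficientwise form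
  have hcontr : ∀ (c : ℝ), 0 ≤ c → ∀ u v : A → K17,
      (∀ β γ, γ < c → (u β).coeff γ = (v β).coeff γ) →
      ∀ α γ, γ < c + lam → (T u α).coeff γ = (T v α).coeff γ := by
    intro c hc u v h α
    have hOr := hE2 α c hc u v
      (fun β => (close_iff17 c (u β) (v β)).mpr (fun γ hγ => h β γ hγ))
    apply (close_iff17 (c + lam) (T u α) (T v α)).mp
    by_cases hEe : E α u = E α v
    · left; rw [hTdef, hTdef, hEe]
    · right
      have hEord : c + lam ≤ (E α u - E α v).order := hOr.resolve_left hEe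
      have hds : (E α v - E α u) ≠ 0 := sub_ne_zero.mpr (Ne.symm hEe)
      obtain ⟨hne_u, hord_u⟩ := hunit u α
      obtain ⟨hne_v, hord_v⟩ := hunit v α
      obtain ⟨hinvu, hordu'⟩ := hinv _ hne_u
      obtain ⟨hinvv, hordv'⟩ := hinv _ hne_v
      have hid : T u α - T v α
          = a α * (E α v - E α u) * ((1 + E α u)⁻¹ * (1 + E α v)⁻¹) := by
        rw [hTdef, hTdef]
        field_simp
        ring
      rw [hid,
        HahnSeries.order_mul (mul_ne_zero (ha α).1 hds) (mul_ne_zero hinvu hinvv),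
        HahnSeries.order_mul (ha α).1 hds, HahnSeries.order_mul hinvu hinvv,
        (ha α).2, hordu', hordv', hord_u, hord_v]
      have hvu : (E α v - E α u).order = (E α u - E α v).order := by
        rw [← neg_sub (E α u) (E α v), HahnSeries.order_neg]
      simp only [neg_zero, add_zero, zero_add]
      rw [hvu]
      exact hEord
  -- Step G : consecutive iterates are (n·λ)-close
  have hstep : ∀ (n : ℕ) (β : A) (γ : ℝ), γ < (n : ℝ) * lam → (s (n+1) β).coeff γ = (s n β).coeff γ := by
    intro n
    induction n with
    | zero =>
      intro β γ hγ
      norm_num at hγ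
      rw [HahnSeries.coeff_eq_zero_of_lt_order (by rw [(hord_s 1 β).2]; exact hγ),
        HahnSeries.coeff_eq_zero_of_lt_order (by rw [(hord_s 0 β).2]; exact hγ)]
    | succ n ih =>
      intro β γ hγ
      have h := hcontr ((n : ℝ) * lam) (by positivity) (s (n+1)) (s n) (fun β γ hγ => ih β γ hγ)
        β γ (by push_cast at hγ ⊢; linarith)
      rw [hssucc (n+1)]
      conv_rhs => rw [hssucc n]
      exact h
  -- Step H : all later iterates are (n·λ)-close to iterate n
  have hclose_nm : ∀ (n m : ℕ), n ≤ m → ∀ (β : A) (γ : ℝ), γ < (n : ℝ) * lam →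
      (s m β).coeff γ = (s n β).coeff γ := by
    intro n m hnm
    induction m, hnm using Nat.le_induction with
    | base => intro β γ _; rfl
    | succ m hm ih =>
      intro β γ hγ
      have hγ' : γ < (m : ℝ) * lam :=
        lt_of_lt_of_le hγ (mul_le_mul_of_nonneg_right (by exact_mod_cast hm) hlam.le)
      rw [hstep m β γ hγ', ih β γ hγ]
  -- the coefficientwise-Cauchy property
  have hcau : ∀ β (γ : ℝ) (m n : ℕ), ⌈γ / lam⌉₊ + 1 ≤ m → ⌈γ / lam⌉₊ + 1 ≤ n →
      (s m β).coeff γ = (s n β).coeff γ := by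
    intro β γ m n hm hn
    rcases le_total n m with h | h
    · exact hclose_nm n m h β γ (Nlt17 lam hlam γ n hn)
    · exact (hclose_nm m n h β γ (Nlt17 lam hlam γ m hm)).symm
  -- the limit
  set u : A → K17 := fun β => hahnLimit17 lam hlam (fun n => s n β) (hcau β) with hu
  have hu_coeff : ∀ β (γ : ℝ) (n : ℕ), ⌈γ / lam⌉₊ + 1 ≤ n →
      (u β).coeff γ = (s n β).coeff γ :=
    fun β γ n h => hahnLimit17_coeff lam hlam (fun n => s n β) (hcau β) γ n h
  have hu_close : ∀ (n : ℕ) β (γ : ℝ), γ < (n : ℝ) * lam →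
      (u β).coeff γ = (s n β).coeff γ := by
    intro n β γ hγ
    rw [hu_coeff β γ (max n (⌈γ / lam⌉₊ + 1)) (le_max_right _ _),
      hclose_nm n (max n (⌈γ / lam⌉₊ + 1)) (le_max_left _ _) β γ hγ]
  have hu_ne_ord : ∀ β, u β ≠ 0 ∧ (u β).order = 0 := by
    intro β
    have h0 : (u β).coeff 0 ≠ 0 := by
      rw [hu_coeff β 0 (⌈(0:ℝ) / lam⌉₊ + 1) le_rfl]
      have hh := hord_s (⌈(0:ℝ) / lam⌉₊ + 1) β
      have hc := HahnSeries.coeff_order_eq_zero.not.mpr hh.1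
      rwa [hh.2] at hc
    have hne : u β ≠ 0 := HahnSeries.ne_zero_of_coeff_ne_zero h0
    refine ⟨hne, le_antisymm (HahnSeries.order_le_of_coeff_ne_zero h0) ?_⟩
    by_contra hlt
    push_neg at hlt
    apply HahnSeries.coeff_order_eq_zero.not.mpr hne
    rw [hu_coeff β _ (⌈((u β).order) / lam⌉₊ + 1) le_rfl]
    apply HahnSeries.coeff_eq_zero_of_lt_order
    rw [(hord_s _ β).2]
    exact hlt
  -- u is a fixed point of T
  have hfix : T u = u := by
    funext α
    apply HahnSeries.coeff_injective
    funext γ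
    obtain ⟨n, hn⟩ := exists_nat_gt (γ / lam)
    have hγn : γ < (n : ℝ) * lam := (div_lt_iff₀ hlam).mp hn
    have h1 : (T u α).coeff γ = (T (s n) α).coeff γ :=
      hcontr ((n : ℝ) * lam) (by positivity) u (s n) (fun β γ hγ => hu_close n β γ hγ)
        α γ (by linarith)
    have h2 : (s (n+1) α).coeff γ = (u α).coeff γ :=
      (hu_close (n+1) α γ (by push_cast; nlinarith)).symm
    rw [h1, ← hssucc n]
    exact h2
  have hmain : ∀ α, u α ≠ 0 ∧ (u α).order = 0 ∧ u α * (1 + E α u) = a α := by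
    intro α
    refine ⟨(hu_ne_ord α).1, (hu_ne_ord α).2, ?_⟩
    have h1 : u α = a α * (1 + E α u)⁻¹ := by
      conv_lhs => rw [← hfix]
      rw [hTdef]
    rw [h1, mul_assoc, inv_mul_cancel₀ (hunit u α).1, mul_one]
  refine ⟨u, hmain, ?_⟩
  -- uniqueness
  intro v hv
  have hvT : ∀ α, v α = T v α := by
    intro α
    obtain ⟨hvne, hvord, hveq⟩ := hv α
    rw [hTdef]
    have h := congrArg (· * (1 + E α v)⁻¹) hveq
    rwa [mul_assoc, mul_inv_cancel₀ (hunit v α).1, mul_one] at h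
  have hind : ∀ (n : ℕ) β (γ : ℝ), γ < (n : ℝ) * lam →
      (v β).coeff γ = (u β).coeff γ := by
    intro n
    induction n with
    | zero =>
      intro β γ hγ
      norm_num at hγ
      rw [HahnSeries.coeff_eq_zero_of_lt_order (by rw [(hv β).2.1]; exact hγ),
        HahnSeries.coeff_eq_zero_of_lt_order (by rw [(hu_ne_ord β).2]; exact hγ)]
    | succ n ih =>
      intro β γ hγ
      have h := hcontr ((n : ℝ) * lam) (by positivity) v u (fun β γ hγ => ih β γ hγ)
        β γ (by push_cast at hγ ⊢; linarith)
      rw [hvT β]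
      conv_rhs => rw [← hfix]
      exact h
  funext β
  apply HahnSeries.coeff_injective
  funext γ
  obtain ⟨n, hn⟩ := exists_nat_gt (γ / lam)
  exact hind n β γ ((div_lt_iff₀ hlam).mp hn)
end

section
/- Let n ≥ 1, k ≥ 1, and for each i ∈ {1,…,k} let P_{i,ℤ} ⊂ ℤ^n be a finite nonempty set and ν_i : P_{i,ℤ} → ℝ. Assume that the set of differences {α − α' : α, α' ∈ P_{i,ℤ}, 1 ≤ i ≤ k} spans ℝ^n. Let δ' ≥ 0 and for each i let m_i : (P_{i,ℤ} → ℝ) → ℝ be a concave function satisfying m_i(u + a·𝟙) = m_i(u) + a for all a ∈ ℝ and min_α u(α) − δ' ≤ m_i(u) ≤ min_α u(α) for all u. For (ξ, η) ∈ ℝ^n × ℝ^k define μ_{i,α}(ξ,η) = η_i − ⟨α, ξ⟩ + ν_i(α), and H(ξ,η) = Σ_{i=1}^k ( Σ_{α ∈ P_{i,ℤ}} μ_{i,α}(ξ,η) − |P_{i,ℤ}| · m_i((μ_{i,α}(ξ,η))_α) ). Then: (i) H(ξ,η) = H(ξ,η') for all η, η' ∈ ℝ^k; (ii) H is convex as a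 function of (ξ,η); (iii) H ≥ 0; (iv) there exist constants c > 0 and C > 0 such that c‖ξ‖ − C ≤ H(ξ,η) ≤ C(‖ξ‖ + 1) for all (ξ,η). -/
open scoped RealInnerProductSpace

theorem aux_min_sup {n : ℕ} (hn : 1 ≤ n) {S : Type} [Fintype S] [Nonempty S]
    (d : S → EuclideanSpace ℝ (Fin n))
    (hsymm : ∀ s, ∃ s', d s' = -d s)
    (hspan : Submodule.span ℝ (Set.range d) = ⊤) :
    ∃ c : ℝ, 0 < c ∧ ∀ ξ, c * ‖ξ‖ ≤
      Finset.univ.sup' Finset.univ_nonempty (fun s => ⟪d s, ξ⟫) := by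
  set f : EuclideanSpace ℝ (Fin n) → ℝ :=
    fun ξ => Finset.univ.sup' Finset.univ_nonempty (fun s => ⟪d s, ξ⟫) with hf
  have hcont : Continuous f :=
    Continuous.finset_sup'_apply _ fun s _ => continuous_const.inner continuous_id
  have hfpos : ∀ ξ : EuclideanSpace ℝ (Fin n), ξ ≠ 0 → 0 < f ξ := by
    intro ξ hξ
    have hex : ∃ s, ⟪d s, ξ⟫ ≠ 0 := by
      by_contra h
      push_neg at h
      have hall : ∀ y ∈ Submodule.span ℝ (Set.range d), ⟪y, ξ⟫ = 0 := by
        intro y hy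
        induction hy using Submodule.span_induction with
        | mem y hy => obtain ⟨s, rfl⟩ := hy; exact h s
        | zero => simp
        | add y z _ _ hy hz => rw [inner_add_left, hy, hz]; ring
        | smul a y _ hy => rw [real_inner_smul_left, hy]; ring
      have : ⟪ξ, ξ⟫ = 0 := hall ξ (by rw [hspan]; trivial)
      exact hξ (inner_self_eq_zero.mp this)
    obtain ⟨s, hs⟩ := hex
    rcases lt_or_gt_of_ne hs with hlt | hgt
    · obtain ⟨s', hs'⟩ := hsymm s
      have : 0 < ⟪d s', ξ⟫ := by rw [hs', inner_neg_left]; linarith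
      calc (0:ℝ) < ⟪d s', ξ⟫ := this
        _ ≤ f ξ := Finset.le_sup' (fun s => ⟪d s, ξ⟫) (Finset.mem_univ s')
    · calc (0:ℝ) < ⟪d s, ξ⟫ := hgt
        _ ≤ f ξ := Finset.le_sup' (fun s => ⟪d s, ξ⟫) (Finset.mem_univ s)
  have hsph : IsCompact (Metric.sphere (0 : EuclideanSpace ℝ (Fin n)) 1) :=
    isCompact_sphere _ _
  have hne : (Metric.sphere (0 : EuclideanSpace ℝ (Fin n)) 1).Nonempty :=
    ⟨EuclideanSpace.single ⟨0, hn⟩ 1, by simp⟩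
  obtain ⟨x0, hx0, hmin⟩ := hsph.exists_isMinOn hne hcont.continuousOn
  have hx0ne : x0 ≠ 0 := by
    intro h
    rw [Metric.mem_sphere, h] at hx0
    simp at hx0
  refine ⟨f x0, hfpos x0 hx0ne, fun ξ => ?_⟩
  rcases eq_or_ne ξ 0 with rfl | hξ
  · simp [hf]
  · have hnorm : 0 < ‖ξ‖ := norm_pos_iff.2 hξ
    set x := ‖ξ‖⁻¹ • ξ with hx
    have hxs : x ∈ Metric.sphere (0 : EuclideanSpace ℝ (Fin n)) 1 := by
      simp [hx, norm_smul, abs_of_nonneg (le_of_lt (inv_pos.2 hnorm)),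
        inv_mul_cancel₀ (ne_of_gt hnorm)]
    have h1 : f x0 ≤ f x := hmin hxs
    obtain ⟨s, _, hsx⟩ := Finset.exists_mem_eq_sup' Finset.univ_nonempty
      (fun s => ⟪d s, x⟫)
    have h2 : f x = ‖ξ‖⁻¹ * ⟪d s, ξ⟫ := by
      show (Finset.univ.sup' Finset.univ_nonempty fun s => ⟪d s, x⟫) = _
      rw [hsx, hx, real_inner_smul_right]
    have h3 : ⟪d s, ξ⟫ ≤ f ξ := Finset.le_sup' (fun s => ⟪d s, ξ⟫) (Finset.mem_univ s)
    have h4 : f x0 ≤ ‖ξ‖⁻¹ * f ξ := by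
      calc f x0 ≤ f x := h1
        _ = ‖ξ‖⁻¹ * ⟪d s, ξ⟫ := h2
        _ ≤ ‖ξ‖⁻¹ * f ξ := by
            apply mul_le_mul_of_nonneg_left h3 (le_of_lt (inv_pos.2 hnorm))
    calc f x0 * ‖ξ‖ ≤ (‖ξ‖⁻¹ * f ξ) * ‖ξ‖ := by
          apply mul_le_mul_of_nonneg_right h4 (le_of_lt hnorm)
      _ = f ξ := by field_simp

set_option maxHeartbeats 2000000 in
/-- Properties of the wrapping Hamiltonian for complete
intersections,
`H(ξ,η) = Σᵢ (Σ_α μ_{i,α}(ξ,η) − |P_{i,ℤ}|·mᵢ((μ_{i,α}(ξ,η))_α))` with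
`μ_{i,α}(ξ,η) = ηᵢ − ⟨α,ξ⟩ + νᵢ(α)`: assuming the differences of the points in
the supports span `ℝⁿ`, `H` depends only on `ξ`, is convex, nonnegative,
proper and of linear growth. -/
theorem stmt_19 (n k : ℕ) (hn : 1 ≤ n) (hk : 1 ≤ k)
    (ι : Fin k → Type) [∀ i, Fintype (ι i)] [∀ i, Nonempty (ι i)]
    (α : ∀ i, ι i → EuclideanSpace ℝ (Fin n))
    (hα_int : ∀ i j l, ∃ z : ℤ, α i j l = (z : ℝ))
    (hspan : Submodule.span ℝ
      {d : EuclideanSpace ℝ (Fin n) | ∃ i a b, d = α i a - α i b} = ⊤)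
    (ν : ∀ i, ι i → ℝ) (δ' : ℝ) (hδ' : 0 ≤ δ')
    (m : ∀ i, (ι i → ℝ) → ℝ)
    (hm_concave : ∀ i, ConcaveOn ℝ Set.univ (m i))
    (hm_shift : ∀ i (u : ι i → ℝ) (a : ℝ), m i (fun j => u j + a) = m i u + a)
    (hm_min : ∀ i (u : ι i → ℝ),
      Finset.univ.inf' Finset.univ_nonempty u - δ' ≤ m i u ∧
        m i u ≤ Finset.univ.inf' Finset.univ_nonempty u)
    (μ : ∀ i, ι i → EuclideanSpace ℝ (Fin n) → (Fin k → ℝ) → ℝ)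
    (hμ : ∀ i j ξ η, μ i j ξ η = η i - ⟪α i j, ξ⟫ + ν i j)
    (H : EuclideanSpace ℝ (Fin n) → (Fin k → ℝ) → ℝ)
    (hH : ∀ ξ η, H ξ η = ∑ i,
      ((∑ j, μ i j ξ η) - (Fintype.card (ι i) : ℝ) * m i fun j => μ i j ξ η)) :
    (∀ ξ η η', H ξ η = H ξ η') ∧
    ConvexOn ℝ Set.univ (fun p : EuclideanSpace ℝ (Fin n) × (Fin k → ℝ) => H p.1 p.2) ∧
    (∀ ξ η, 0 ≤ H ξ η) ∧
    ∃ c C : ℝ, 0 < c ∧ 0 < C ∧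
      ∀ ξ η, c * ‖ξ‖ - C ≤ H ξ η ∧ H ξ η ≤ C * (‖ξ‖ + 1) := by
    classical
  set u : ∀ i : Fin k, EuclideanSpace ℝ (Fin n) → ι i → ℝ :=
    fun i ξ j => -⟪α i j, ξ⟫ + ν i j with hu
  set T : Fin k → EuclideanSpace ℝ (Fin n) → ℝ :=
    fun i ξ => (∑ j, u i ξ j) - (Fintype.card (ι i) : ℝ) * m i (u i ξ) with hT
  have hterm : ∀ (i : Fin k) ξ η, (∑ j, μ i j ξ η)
      - (Fintype.card (ι i) : ℝ) * m i (fun j => μ i j ξ η) = T i ξ := by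
    intro i ξ η
    have h1 : (fun j => μ i j ξ η) = fun j => u i ξ j + η i := by
      funext j; rw [hμ]; simp [hu]; ring
    rw [h1, hm_shift, hT]
    simp only [Finset.sum_add_distrib, Finset.sum_const, Finset.card_univ, nsmul_eq_mul]
    ring
  have hH' : ∀ ξ η, H ξ η = ∑ i, T i ξ := by
    intro ξ η
    rw [hH]
    exact Finset.sum_congr rfl fun i _ => hterm i ξ η
  -- part 1
  have part1 : ∀ ξ η η', H ξ η = H ξ η' := by
    intro ξ η η'; rw [hH' ξ η, hH' ξ η']
  -- nonnegativity of T
  have hTnn : ∀ (i : Fin k) ξ, 0 ≤ T i ξ := by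
    intro i ξ
    have h1 : m i (u i ξ) ≤ Finset.univ.inf' Finset.univ_nonempty (u i ξ) := (hm_min i _).2
    have h2 : (Fintype.card (ι i) : ℝ) * m i (u i ξ) ≤ ∑ j, u i ξ j := by
      calc (Fintype.card (ι i) : ℝ) * m i (u i ξ) = ∑ _j : ι i, m i (u i ξ) := by
            simp [Finset.sum_const, Finset.card_univ, nsmul_eq_mul]
        _ ≤ ∑ j, u i ξ j := Finset.sum_le_sum fun j _ =>
            le_trans h1 (Finset.inf'_le _ (Finset.mem_univ j))
    simp only [hT]
    linarith
  have part3 : ∀ ξ η, 0 ≤ H ξ η := by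
    intro ξ η
    rw [hH']
    exact Finset.sum_nonneg fun i _ => hTnn i ξ
  -- convexity
  have part2 : ConvexOn ℝ Set.univ
      (fun p : EuclideanSpace ℝ (Fin n) × (Fin k → ℝ) => H p.1 p.2) := by
    refine ⟨convex_univ, ?_⟩
    intro p _ q _ a b ha hb hab
    simp only [smul_eq_mul]
    rw [hH', hH', hH']
    have hfst : (a • p + b • q).1 = a • p.1 + b • q.1 := rfl
    rw [hfst, Finset.mul_sum, Finset.mul_sum, ← Finset.sum_add_distrib]
    refine Finset.sum_le_sum fun i _ => ?_
    have hcombo : u i (a • p.1 + b • q.1) = a • (u i p.1) + b • (u i q.1) := by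
      funext j
      simp only [hu, Pi.add_apply, Pi.smul_apply, smul_eq_mul, inner_add_right,
        real_inner_smul_right]
      linear_combination (ν i j) * hab.symm
    have h1 := (hm_concave i).2 (Set.mem_univ (u i p.1)) (Set.mem_univ (u i q.1)) ha hb hab
    rw [← hcombo] at h1
    have h2 : (Fintype.card (ι i) : ℝ) * (a • m i (u i p.1) + b • m i (u i q.1)) ≤
        (Fintype.card (ι i) : ℝ) * m i (u i (a • p.1 + b • q.1)) :=
      mul_le_mul_of_nonneg_left h1 (Nat.cast_nonneg _)
    have h3 : ∑ j, u i (a • p.1 + b • q.1) j =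
        a * (∑ j, u i p.1 j) + b * (∑ j, u i q.1 j) := by
      rw [hcombo]
      simp [Finset.sum_add_distrib, Finset.mul_sum]
    simp only [smul_eq_mul] at h2
    simp only [hT]
    nlinarith [h2, h3]
  -- the sigma type of difference data
  haveI : Nonempty (Fin k) := ⟨⟨0, hk⟩⟩
  set S := (i : Fin k) × (ι i × ι i) with hS
  haveI : Nonempty S :=
    ⟨⟨Classical.arbitrary (Fin k), Classical.arbitrary _, Classical.arbitrary _⟩⟩
  set dd : S → EuclideanSpace ℝ (Fin n) := fun s => α s.1 s.2.2 - α s.1 s.2.1 with hdd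
  have hsymm : ∀ s, ∃ s', dd s' = -dd s := by
    rintro ⟨i, a, b⟩
    exact ⟨⟨i, b, a⟩, by simp [hdd, neg_sub]⟩
  have hrange : Set.range dd = {v : EuclideanSpace ℝ (Fin n) | ∃ i a b, v = α i a - α i b} := by
    ext x
    constructor
    · rintro ⟨⟨i, a, b⟩, rfl⟩; exact ⟨i, b, a, rfl⟩
    · rintro ⟨i, a, b, rfl⟩; exact ⟨⟨i, b, a⟩, rfl⟩
  obtain ⟨c, hc, hcle⟩ := aux_min_sup hn dd hsymm (by rw [hrange]; exact hspan)
  -- constants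
  set B1 : ℝ := Finset.univ.sup' Finset.univ_nonempty (fun s : S => ‖dd s‖) with hB1def
  set B2 : ℝ := Finset.univ.sup' Finset.univ_nonempty
    (fun s : S => |ν s.1 s.2.1 - ν s.1 s.2.2|) with hB2def
  have hB1 : 0 ≤ B1 :=
    le_trans (norm_nonneg (dd (Classical.arbitrary S)))
      (Finset.le_sup' (fun s : S => ‖dd s‖) (Finset.mem_univ _))
  have hB2 : 0 ≤ B2 :=
    le_trans (abs_nonneg _)
      (Finset.le_sup' (fun s : S => |ν s.1 s.2.1 - ν s.1 s.2.2|) (Finset.mem_univ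
        (Classical.arbitrary S)))
  set N : ℝ := ∑ i : Fin k, (Fintype.card (ι i) : ℝ) with hN
  have hN1 : 1 ≤ N := by
    calc (1:ℝ) ≤ (k:ℝ) := by exact_mod_cast hk
      _ = ∑ _i : Fin k, (1:ℝ) := by simp
      _ ≤ N := Finset.sum_le_sum fun i _ => by
          exact_mod_cast Fintype.card_pos (α := ι i)
  set C : ℝ := N * (B1 + B2 + δ' + 1) with hC
  have hCpos : 0 < C := by nlinarith
  -- lower bound helper
  have hTlb : ∀ (i : Fin k) ξ (a b : ι i), u i ξ a - u i ξ b ≤ T i ξ := by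
    intro i ξ a b
    set infv := Finset.univ.inf' Finset.univ_nonempty (u i ξ) with hinf
    have h7 : m i (u i ξ) ≤ infv := (hm_min i _).2
    have h2 : (Fintype.card (ι i) : ℝ) * m i (u i ξ) ≤ (Fintype.card (ι i) : ℝ) * infv :=
      mul_le_mul_of_nonneg_left h7 (Nat.cast_nonneg _)
    have hnn : ∀ j, 0 ≤ u i ξ j - infv := fun j =>
      sub_nonneg.2 (Finset.inf'_le _ (Finset.mem_univ j))
    have h5 : u i ξ a - infv ≤ ∑ j, (u i ξ j - infv) :=
      Finset.single_le_sum (fun j _ => hnn j) (Finset.mem_univ a)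
    have hsum : ∑ j, (u i ξ j - infv) =
        (∑ j, u i ξ j) - (Fintype.card (ι i) : ℝ) * infv := by
      simp [Finset.sum_sub_distrib, Finset.sum_const, Finset.card_univ, nsmul_eq_mul]
    have h6 : infv ≤ u i ξ b := Finset.inf'_le _ (Finset.mem_univ b)
    simp only [hT]
    linarith
  have hlow : ∀ ξ η, c * ‖ξ‖ - B2 ≤ H ξ η := by
    intro ξ η
    obtain ⟨s, _, hs⟩ := Finset.exists_mem_eq_sup' (Finset.univ_nonempty (α := S))
      (fun s => ⟪dd s, ξ⟫)
    obtain ⟨i, a, b⟩ := s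
    have h0 : c * ‖ξ‖ ≤ ⟪dd ⟨i, a, b⟩, ξ⟫ := by rw [← hs]; exact hcle ξ
    have hB2' : ν i b - ν i a ≤ B2 := by
      have h := Finset.le_sup' (fun s : S => |ν s.1 s.2.1 - ν s.1 s.2.2|)
        (Finset.mem_univ (⟨i, b, a⟩ : S))
      exact le_trans (le_abs_self _) h
    have e1 : u i ξ a - u i ξ b = ⟪dd ⟨i, a, b⟩, ξ⟫ + (ν i a - ν i b) := by
      simp [hu, hdd, inner_sub_left]
      ring
    have hTi : u i ξ a - u i ξ b ≤ T i ξ := hTlb i ξ a b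
    have hTH : T i ξ ≤ ∑ i', T i' ξ :=
      Finset.single_le_sum (fun i' _ => hTnn i' ξ) (Finset.mem_univ i)
    rw [hH']
    linarith
  -- upper bound helper
  have hub : ∀ (i : Fin k) ξ, T i ξ ≤ (Fintype.card (ι i) : ℝ) * (B1 * ‖ξ‖ + B2 + δ') := by
    intro i ξ
    obtain ⟨j0, _, hj0⟩ := Finset.exists_mem_eq_inf' (Finset.univ_nonempty (α := ι i)) (u i ξ)
    have hm1 : Finset.univ.inf' Finset.univ_nonempty (u i ξ) - δ' ≤ m i (u i ξ) :=
      (hm_min i _).1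
    rw [hj0] at hm1
    have hbound : ∀ j, u i ξ j - u i ξ j0 ≤ B1 * ‖ξ‖ + B2 := by
      intro j
      have e1 : u i ξ j - u i ξ j0 = ⟪dd ⟨i, j, j0⟩, ξ⟫ + (ν i j - ν i j0) := by
        simp [hu, hdd, inner_sub_left]
        ring
      have h1 : ⟪dd ⟨i, j, j0⟩, ξ⟫ ≤ B1 * ‖ξ‖ := by
        calc ⟪dd ⟨i, j, j0⟩, ξ⟫ ≤ ‖dd ⟨i, j, j0⟩‖ * ‖ξ‖ := real_inner_le_norm _ _
          _ ≤ B1 * ‖ξ‖ := mul_le_mul_of_nonneg_right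
              (Finset.le_sup' (fun s : S => ‖dd s‖) (Finset.mem_univ (⟨i, j, j0⟩ : S)))
              (norm_nonneg _)
      have h2 : ν i j - ν i j0 ≤ B2 :=
        le_trans (le_abs_self _)
          (Finset.le_sup' (fun s : S => |ν s.1 s.2.1 - ν s.1 s.2.2|)
            (Finset.mem_univ (⟨i, j, j0⟩ : S)))
      linarith
    have key : ∑ j, (u i ξ j - u i ξ j0) ≤ (Fintype.card (ι i) : ℝ) * (B1 * ‖ξ‖ + B2) := by
      calc ∑ j, (u i ξ j - u i ξ j0) ≤ ∑ _j : ι i, (B1 * ‖ξ‖ + B2) :=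
            Finset.sum_le_sum fun j _ => hbound j
        _ = _ := by
              simp [Finset.sum_const, Finset.card_univ, nsmul_eq_mul]
              ring
    have hsum : ∑ j, (u i ξ j - u i ξ j0) =
        (∑ j, u i ξ j) - (Fintype.card (ι i) : ℝ) * u i ξ j0 := by
      simp [Finset.sum_sub_distrib, Finset.sum_const, Finset.card_univ, nsmul_eq_mul]
    have h3 : (Fintype.card (ι i) : ℝ) * (u i ξ j0 - δ') ≤
        (Fintype.card (ι i) : ℝ) * m i (u i ξ) :=
      mul_le_mul_of_nonneg_left hm1 (Nat.cast_nonneg _)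
    simp only [hT]
    nlinarith [key, hsum, h3]
  have hup : ∀ ξ η, H ξ η ≤ C * (‖ξ‖ + 1) := by
    intro ξ η
    rw [hH']
    have h1 : ∑ i, T i ξ ≤ N * (B1 * ‖ξ‖ + B2 + δ') := by
      rw [hN, Finset.sum_mul]
      exact Finset.sum_le_sum fun i _ => hub i ξ
    have h2 : B1 * ‖ξ‖ + B2 + δ' ≤ (B1 + B2 + δ' + 1) * (‖ξ‖ + 1) := by
      nlinarith [norm_nonneg ξ, hB1, hB2, hδ']
    have h3 : N * (B1 * ‖ξ‖ + B2 + δ') ≤ N * ((B1 + B2 + δ' + 1) * (‖ξ‖ + 1)) :=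
      mul_le_mul_of_nonneg_left h2 (by linarith)
    calc ∑ i, T i ξ ≤ N * (B1 * ‖ξ‖ + B2 + δ') := h1
      _ ≤ N * ((B1 + B2 + δ' + 1) * (‖ξ‖ + 1)) := h3
      _ = C * (‖ξ‖ + 1) := by rw [hC]; ring
  refine ⟨part1, part2, part3, c, C, hc, hCpos, fun ξ η => ⟨?_, hup ξ η⟩⟩
  have hB2C : B2 ≤ C := by nlinarith
  have := hlow ξ η
  linarith
end
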